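/- arXiv:2006.02701 — 3 statements merged into one kernel-verified Lean document; each statement's English description precedes it below -/
import Mathlib

section
/- Existence of a weak-* limit flux measure (Lemma 5). Let (ε_n) be admissible parameters with ε_n → 0 and u^{ε_n} solutions of the Helmholtz problem on Ω_{ε_n} satisfying the flux bound (1/ε_n²) ∫_{C_{ε_n}} |∂₂u^{ε_n}| ≤ C for all n. Define j^{ε}(x) := (1/(Lε²)) ∂₂u^{ε}(x) 𝟏_{C_ε}(x), and let K := [0,a]×[−b, L+V+1], a compact set containing Ω_ε for all small ε. Then there exist a subsequence (still denoted ε_n) and a continuous linear functional j_* on the Banach space C(K,ℝ) of continuous functions on K (with the sup norm) with operator norm at most C/L, such that ∫_{ℝ²} j^{ε_n} φ dx → j_*(φ|_K) for every continuous φ : ℝ² → ℝ, and such that j_*(ψ) = 0 for every ψ ∈ C(K,ℝ) vanishing on the segment [0,a]×{0} (i.e. the limit is a finite signed measure supported on the closure of Γ₀). -/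
open MeasureTheory Set Filter Topology

noncomputable section

/-- First partial derivative `∂₁u`. -/
def pd1 (u : ℝ × ℝ → ℝ) (x : ℝ × ℝ) : ℝ := fderiv ℝ u x (1, 0)

/-- Second partial derivative `∂₂u`. -/
def pd2 (u : ℝ × ℝ → ℝ) (x : ℝ × ℝ) : ℝ := fderiv ℝ u x (0, 1)

/-- The gradient `∇u` as a pair. -/
def grad (u : ℝ × ℝ → ℝ) (x : ℝ × ℝ) : ℝ × ℝ := (pd1 u x, pd2 u x)

/-- Euclidean scalar product on `ℝ²`. -/
def dot (p q : ℝ × ℝ) : ℝ := p.1 * q.1 + p.2 * q.2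

/-- The limit domain `Ω₀ = (0,a) × (−b,0)`. -/
def Omega0 (a b : ℝ) : Set (ℝ × ℝ) := Ioo 0 a ×ˢ Ioo (-b) 0

/-- The resonator strip `S_ε = (0,a) × (Lε, (L+V)ε)`. -/
def Strip (a L V ε : ℝ) : Set (ℝ × ℝ) := Ioo 0 a ×ˢ Ioo (L * ε) ((L + V) * ε)

/-- The channels `C_ε = ⋃_{k=0}^{a/ε−1} (kε, kε+αε³) × [0, Lε]`. -/
def Channels (a L α ε : ℝ) : Set (ℝ × ℝ) :=
  ⋃ k ∈ Finset.range ⌊a / ε⌋₊,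
    Ioo ((k : ℝ) * ε) ((k : ℝ) * ε + α * ε ^ 3) ×ˢ Icc 0 (L * ε)

/-- The perforated domain `Ω_ε = Ω₀ ∪ S_ε ∪ C_ε`. -/
def OmegaEps (a b L V α ε : ℝ) : Set (ℝ × ℝ) :=
  Omega0 a b ∪ Strip a L V ε ∪ Channels a L α ε

/-- `u` is C¹ on an open neighborhood of the closure of `s`. -/
def C1Nhd (u : ℝ × ℝ → ℝ) (s : Set (ℝ × ℝ)) : Prop :=
  ∃ U : Set (ℝ × ℝ), IsOpen U ∧ closure s ⊆ U ∧ ContDiffOn ℝ 1 u U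

/-- `ε` is an admissible parameter: `ε > 0` and `a/ε ∈ ℕ`. -/
def Admissible (a ε : ℝ) : Prop := 0 < ε ∧ ∃ N : ℕ, a = (N : ℝ) * ε

/-- Weak solution of the Helmholtz problem `−Δu − ω²u = f` in `Ω_ε` with
homogeneous Neumann boundary conditions. -/
def IsHelmholtzSol (a b L V α ω ε : ℝ) (f u : ℝ × ℝ → ℝ) : Prop :=
  C1Nhd u (OmegaEps a b L V α ε) ∧
  ∀ φ : ℝ × ℝ → ℝ, ContDiff ℝ 1 φ → HasCompactSupport φ →
    (∫ x in OmegaEps a b L V α ε, dot (grad u x) (grad φ x))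
      - ω ^ 2 * ∫ x in OmegaEps a b L V α ε, u x * φ x
      = ∫ x in OmegaEps a b L V α ε, f x * φ x

/-- Vertical average of `u` over the resonator strip. -/
def vEps (L V ε : ℝ) (u : ℝ × ℝ → ℝ) (x₁ : ℝ) : ℝ :=
  (1 / (ε * V)) * ∫ x₂ in (ε * L)..(ε * (L + V)), u (x₁, x₂)

/-- Corrector `w^ε = (u^ε − u)/ε`. -/
def wEps (ε : ℝ) (uε u : ℝ × ℝ → ℝ) : ℝ × ℝ → ℝ := fun x => (uε x - u x) / ε

/-! ### Auxiliary definitions for the proof -/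

/-- The compact box `K`. -/
abbrev KK (a b L V : ℝ) : Set (ℝ × ℝ) := Icc (0:ℝ) a ×ˢ Icc (-b) (L + V + 1)

open Classical in
/-- Extension by zero of a continuous function on `K`. -/
def extK (a b L V : ℝ) (ψ : C(↥(KK a b L V), ℝ)) (x : ℝ × ℝ) : ℝ :=
  if h : x ∈ KK a b L V then ψ ⟨x, h⟩ else 0

/-- The flux functional. -/
def Lam (a b L V α εv : ℝ) (u : ℝ × ℝ → ℝ) (ψ : C(↥(KK a b L V), ℝ)) : ℝ :=
  ∫ x in Channels a L α εv, (1 / (L * εv ^ 2)) * pd2 u x * extK a b L V ψ x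

lemma measurableSet_KK (a b L V : ℝ) : MeasurableSet (KK a b L V) :=
  measurableSet_Icc.prod measurableSet_Icc

lemma isCompact_KK (a b L V : ℝ) : IsCompact (KK a b L V) :=
  isCompact_Icc.prod isCompact_Icc

lemma measurableSet_channels (a L α εv : ℝ) : MeasurableSet (Channels a L α εv) := by
  refine MeasurableSet.biUnion (Finset.range ⌊a / εv⌋₊).countable_toSet fun k _ => ?_
  exact (measurableSet_Ioo.prod measurableSet_Icc)

lemma channels_subset_KK {a b L V α εv : ℝ} (hb : 0 < b) (hL : 0 < L) (hV : 0 < V)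
    (hα : 0 < α) (hε : 0 < εv) (hadm : ∃ N : ℕ, a = (N : ℝ) * εv)
    (hε1 : εv ≤ 1 / (α + 1)) : Channels a L α εv ⊆ KK a b L V := by
  obtain ⟨N, hN⟩ := hadm
  have hfloor : ⌊a / εv⌋₊ = N := by
    rw [hN, mul_div_assoc, div_self hε.ne', mul_one, Nat.floor_natCast]
  intro x hx
  simp only [Channels, mem_iUnion, Finset.mem_range, hfloor] at hx
  obtain ⟨k, hk, hxk⟩ := hx
  obtain ⟨hx1, hx2⟩ := hxk
  have hε1' : εv ≤ 1 := le_trans hε1 (by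
    rw [div_le_one (by linarith)]; linarith)
  have hαε : α * εv ^ 2 ≤ 1 := by
    have h0 : εv * (α + 1) ≤ 1 := (le_div_iff₀ (by linarith)).mp hε1
    nlinarith [h0, hε, mul_le_mul_of_nonneg_left hε1' (show (0:ℝ) ≤ α * εv by positivity)]
  constructor
  · -- x.1 ∈ Icc 0 a
    have hk' : (k : ℝ) ≤ (N : ℝ) - 1 := by
      have : (k : ℝ) + 1 ≤ (N : ℝ) := by exact_mod_cast hk
      linarith
    constructor
    · have : (0 : ℝ) ≤ (k : ℝ) * εv := by positivity
      exact le_of_lt (lt_of_le_of_lt this hx1.1)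
    · have h3 : α * εv ^ 3 ≤ εv := by
        have : α * εv ^ 3 = (α * εv ^ 2) * εv := by ring
        rw [this]
        calc (α * εv ^ 2) * εv ≤ 1 * εv := by
              exact mul_le_mul_of_nonneg_right hαε hε.le
          _ = εv := one_mul _
      have := hx1.2
      have hka : (k : ℝ) * εv + α * εv ^ 3 ≤ ((N : ℝ) - 1) * εv + εv := by
        have := mul_le_mul_of_nonneg_right hk' hε.le
        linarith
      have : x.1 < a := by
        rw [hN]
        have : ((N : ℝ) - 1) * εv + εv = (N : ℝ) * εv := by ring
        linarith [hx1.2, hka, this]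
      exact this.le
  · -- x.2 ∈ Icc (-b) (L+V+1)
    constructor
    · linarith [hx2.1]
    · have : L * εv ≤ L * 1 := mul_le_mul_of_nonneg_left hε1' hL.le
      linarith [hx2.2]

lemma continuousOn_extK (a b L V : ℝ) (ψ : C(↥(KK a b L V), ℝ)) :
    ContinuousOn (extK a b L V ψ) (KK a b L V) := by
  rw [continuousOn_iff_continuous_restrict]
  have : (KK a b L V).domRestrict (extK a b L V ψ) = ⇑ψ := by
    funext x
    simp only [Set.domRestrict_apply, extK, dif_pos x.prop]
  rw [this]; exact ψ.continuous

lemma integrableOn_pd2 {a b L V α εv : ℝ} {u : ℝ × ℝ → ℝ}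
    (hsub : Channels a L α εv ⊆ KK a b L V)
    (hC1 : C1Nhd u (OmegaEps a b L V α εv)) :
    IntegrableOn (pd2 u) (Channels a L α εv) volume := by
  obtain ⟨U, hUopen, hUsub, hUc1⟩ := hC1
  have hclsub : closure (Channels a L α εv) ⊆ U := by
    refine le_trans (closure_mono ?_) hUsub
    exact fun x hx => Or.inr hx
  have hclcomp : IsCompact (closure (Channels a L α εv)) :=
    (isCompact_KK a b L V).of_isClosed_subset isClosed_closure
      (closure_minimal hsub (isCompact_KK a b L V).isClosed)
  have hcont : ContinuousOn (pd2 u) U := by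
    have h := hUc1.continuousOn_fderiv_of_isOpen hUopen le_rfl
    exact (h.clm_apply continuousOn_const)
  exact ((hcont.mono hclsub).integrableOn_compact hclcomp).mono_set subset_closure
instance KK.compactSpace (a b L V : ℝ) : CompactSpace ↥(KK a b L V) :=
  isCompact_iff_compactSpace.mp (isCompact_KK a b L V)

lemma aesm_extK {a b L V α εv : ℝ} (hsub : Channels a L α εv ⊆ KK a b L V)
    (ψ : C(↥(KK a b L V), ℝ)) :
    AEStronglyMeasurable (extK a b L V ψ) (volume.restrict (Channels a L α εv)) := by
  have h : AEStronglyMeasurable (extK a b L V ψ) (volume.restrict (KK a b L V)) :=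
    (continuousOn_extK a b L V ψ).aestronglyMeasurable (measurableSet_KK a b L V)
  exact h.mono_measure (Measure.restrict_mono hsub le_rfl)

lemma extK_bound {a b L V : ℝ}
    (ψ : C(↥(KK a b L V), ℝ)) (x : ℝ × ℝ) :
    |extK a b L V ψ x| ≤ ‖ψ‖ := by
  unfold extK
  split
  · exact ψ.norm_coe_le_norm _
  · simp [norm_nonneg]

lemma integrableOn_integrand {a b L V α εv : ℝ} {u : ℝ × ℝ → ℝ}
    (hsub : Channels a L α εv ⊆ KK a b L V)
    (hpd2 : IntegrableOn (pd2 u) (Channels a L α εv) volume)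
    (ψ : C(↥(KK a b L V), ℝ)) :
    IntegrableOn (fun x => (1 / (L * εv ^ 2)) * pd2 u x * extK a b L V ψ x)
      (Channels a L α εv) volume := by
  haveI : CompactSpace ↥(KK a b L V) := isCompact_iff_compactSpace.mp (isCompact_KK a b L V)
  have h : IntegrableOn
      (fun x => extK a b L V ψ x * ((1 / (L * εv ^ 2)) * pd2 u x))
      (Channels a L α εv) volume := by
    refine Integrable.bdd_mul (hpd2.const_mul _) (aesm_extK hsub ψ) (c := ‖ψ‖) (Filter.Eventually.of_forall fun x => ?_)
    simpa [Real.norm_eq_abs] using extK_bound ψ x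
  exact h.congr (Filter.Eventually.of_forall fun x => by ring)

lemma Lam_abs_le {a b L V α εv C δ : ℝ} {u : ℝ × ℝ → ℝ}
    (hL : 0 < L) (hε : 0 < εv)
    (hsub : Channels a L α εv ⊆ KK a b L V)
    (hpd2 : IntegrableOn (pd2 u) (Channels a L α εv) volume)
    (hfl : ∫ x in Channels a L α εv, |pd2 u x| ≤ C * εv ^ 2)
    (ψ : C(↥(KK a b L V), ℝ)) (hδ0 : 0 ≤ δ)
    (hδ : ∀ x ∈ Channels a L α εv, |extK a b L V ψ x| ≤ δ) :
    |Lam a b L V α εv u ψ| ≤ (C / L) * δ := by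
  have hc : (0:ℝ) < 1 / (L * εv ^ 2) := by positivity
  have h1 : |Lam a b L V α εv u ψ| ≤
      ∫ x in Channels a L α εv, |(1 / (L * εv ^ 2)) * pd2 u x * extK a b L V ψ x| := by
    have h := norm_integral_le_integral_norm (μ := volume.restrict (Channels a L α εv))
        (f := fun x => (1 / (L * εv ^ 2)) * pd2 u x * extK a b L V ψ x)
    simp only [Real.norm_eq_abs] at h
    exact h
  have h2 : ∫ x in Channels a L α εv, |(1 / (L * εv ^ 2)) * pd2 u x * extK a b L V ψ x|
      ≤ ∫ x in Channels a L α εv, (1 / (L * εv ^ 2)) * δ * |pd2 u x| := by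
    refine setIntegral_mono_on ((integrableOn_integrand hsub hpd2 ψ).abs)
      ((hpd2.abs.const_mul _)) (measurableSet_channels a L α εv) fun x hx => ?_
    rw [abs_mul, abs_mul, abs_of_pos hc]
    calc 1 / (L * εv ^ 2) * |pd2 u x| * |extK a b L V ψ x|
        ≤ 1 / (L * εv ^ 2) * |pd2 u x| * δ := by
          exact mul_le_mul_of_nonneg_left (hδ x hx) (by positivity)
      _ = 1 / (L * εv ^ 2) * δ * |pd2 u x| := by ring
  have h3 : ∫ x in Channels a L α εv, (1 / (L * εv ^ 2)) * δ * |pd2 u x|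
      = (1 / (L * εv ^ 2)) * δ * ∫ x in Channels a L α εv, |pd2 u x| :=
    integral_const_mul _ _
  have h4 : (1 / (L * εv ^ 2)) * δ * ∫ x in Channels a L α εv, |pd2 u x|
      ≤ (1 / (L * εv ^ 2)) * δ * (C * εv ^ 2) :=
    mul_le_mul_of_nonneg_left hfl (by positivity)
  have h5 : (1 / (L * εv ^ 2)) * δ * (C * εv ^ 2) = (C / L) * δ := by
    field_simp
  linarith [h1, h2, h3 ▸ h2, h4]

lemma extK_add (a b L V : ℝ) (ψ χ : C(↥(KK a b L V), ℝ)) (x : ℝ × ℝ) :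
    extK a b L V (ψ + χ) x = extK a b L V ψ x + extK a b L V χ x := by
  unfold extK; split <;> simp

lemma extK_smul (a b L V : ℝ) (r : ℝ) (ψ : C(↥(KK a b L V), ℝ)) (x : ℝ × ℝ) :
    extK a b L V (r • ψ) x = r * extK a b L V ψ x := by
  unfold extK; split <;> simp

lemma Lam_add {a b L V α εv : ℝ} {u : ℝ × ℝ → ℝ}
    (hsub : Channels a L α εv ⊆ KK a b L V)
    (hpd2 : IntegrableOn (pd2 u) (Channels a L α εv) volume)
    (ψ χ : C(↥(KK a b L V), ℝ)) :
    Lam a b L V α εv u (ψ + χ) = Lam a b L V α εv u ψ + Lam a b L V α εv u χ := by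
  unfold Lam
  rw [← integral_add (integrableOn_integrand hsub hpd2 ψ) (integrableOn_integrand hsub hpd2 χ)]
  refine integral_congr_ae (Filter.Eventually.of_forall fun x => ?_)
  simp only [extK_add]; ring

lemma Lam_smul (a b L V α εv : ℝ) (u : ℝ × ℝ → ℝ) (r : ℝ) (ψ : C(↥(KK a b L V), ℝ)) :
    Lam a b L V α εv u (r • ψ) = r * Lam a b L V α εv u ψ := by
  unfold Lam
  rw [← integral_const_mul]
  refine integral_congr_ae (Filter.Eventually.of_forall fun x => ?_)
  simp only [extK_smul]; ring

lemma Lam_sub {a b L V α εv : ℝ} {u : ℝ × ℝ → ℝ}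
    (hsub : Channels a L α εv ⊆ KK a b L V)
    (hpd2 : IntegrableOn (pd2 u) (Channels a L α εv) volume)
    (ψ χ : C(↥(KK a b L V), ℝ)) :
    Lam a b L V α εv u (ψ - χ) = Lam a b L V α εv u ψ - Lam a b L V α εv u χ := by
  have h := Lam_add hsub hpd2 (ψ - χ) χ
  simp only [sub_add_cancel] at h
  linarith
lemma channels_snd_mem {a L α εv : ℝ} {x : ℝ × ℝ} (hx : x ∈ Channels a L α εv) :
    x.2 ∈ Icc 0 (L * εv) := by
  simp only [Channels, mem_iUnion] at hx
  obtain ⟨k, _, hk⟩ := hx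
  exact hk.2

lemma integral_indicator_eq_Lam {a b L V α εv : ℝ} {u : ℝ × ℝ → ℝ}
    (hsub : Channels a L α εv ⊆ KK a b L V)
    (φ : ℝ × ℝ → ℝ) (hφ : Continuous φ) :
    ∫ x : ℝ × ℝ, (Channels a L α εv).indicator
        (fun y => (1 / (L * εv ^ 2)) * pd2 u y) x * φ x
      = Lam a b L V α εv u (ContinuousMap.restrict (KK a b L V) ⟨φ, hφ⟩) := by
  have h1 : (fun x => (Channels a L α εv).indicator
        (fun y => (1 / (L * εv ^ 2)) * pd2 u y) x * φ x)
      = (Channels a L α εv).indicator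
        (fun y => (1 / (L * εv ^ 2)) * pd2 u y * φ y) := by
    funext x
    by_cases hx : x ∈ Channels a L α εv
    · simp [Set.indicator_of_mem hx]
    · simp [Set.indicator_of_notMem hx]
  rw [h1, integral_indicator (measurableSet_channels a L α εv)]
  refine setIntegral_congr_fun (measurableSet_channels a L α εv) fun x hx => ?_
  have hxK : x ∈ KK a b L V := hsub hx
  simp only [extK, dif_pos hxK, ContinuousMap.restrict_apply, ContinuousMap.coe_mk]

lemma iSup_abs_eq_norm {a b L V : ℝ} (ψ : C(↥(KK a b L V), ℝ)) :
    (⨆ x : ↥(KK a b L V), |ψ x|) = ‖ψ‖ := by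
  rw [ContinuousMap.norm_eq_iSup_norm]
  simp only [Real.norm_eq_abs]
/-- **Lemma 5 (Existence of a weak-* limit flux measure).** Along a subsequence, the
rescaled fluxes `j^ε = (1/(Lε²)) ∂₂u^ε 𝟏_{C_ε}` converge weakly-* to a continuous
linear functional `j_*` on `C(K,ℝ)` of norm at most `C/L`, supported on `[0,a]×{0}`. -/
theorem flux_measure_exists
    (a b L V α ω : ℝ) (ha : 0 < a) (hb : 0 < b) (hL : 0 < L) (hV : 0 < V)
    (hα : 0 < α) (hω : 0 < ω)
    (f : ℝ × ℝ → ℝ) (hf : MemLp f 2 volume) (hfsupp : Function.support f ⊆ Omega0 a b)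
    (ε : ℕ → ℝ) (hadm : ∀ n, Admissible a (ε n)) (hεlim : Tendsto ε atTop (𝓝 0))
    (uu : ℕ → ℝ × ℝ → ℝ) (hsol : ∀ n, IsHelmholtzSol a b L V α ω (ε n) f (uu n))
    (C : ℝ)
    (hflux : ∀ n, (1 / (ε n) ^ 2) *
      ∫ x in Channels a L α (ε n), |pd2 (uu n) x| ≤ C) :
    ∃ σ : ℕ → ℕ, StrictMono σ ∧
      ∃ jstar : C(↥(Icc (0:ℝ) a ×ˢ Icc (-b) (L + V + 1)), ℝ) →ₗ[ℝ] ℝ,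
        (∀ ψ : C(↥(Icc (0:ℝ) a ×ˢ Icc (-b) (L + V + 1)), ℝ),
          |jstar ψ| ≤ (C / L) * ⨆ x : ↥(Icc (0:ℝ) a ×ˢ Icc (-b) (L + V + 1)), |ψ x|) ∧
        (∀ (φ : ℝ × ℝ → ℝ) (hφ : Continuous φ),
          Tendsto (fun n => ∫ x : ℝ × ℝ,
              (Channels a L α (ε (σ n))).indicator
                (fun y => (1 / (L * (ε (σ n)) ^ 2)) * pd2 (uu (σ n)) y) x * φ x)
            atTop
            (𝓝 (jstar (ContinuousMap.restrict (Icc (0:ℝ) a ×ˢ Icc (-b) (L + V + 1))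
              ⟨φ, hφ⟩)))) ∧
        (∀ ψ : C(↥(Icc (0:ℝ) a ×ˢ Icc (-b) (L + V + 1)), ℝ),
          (∀ x : ↥(Icc (0:ℝ) a ×ˢ Icc (-b) (L + V + 1)), (x : ℝ × ℝ).2 = 0 → ψ x = 0) →
          jstar ψ = 0) := by
  classical
  have hεpos : ∀ n, 0 < ε n := fun n => (hadm n).1
  have hC0 : 0 ≤ C := by
    refine le_trans ?_ (hflux 0)
    have h0 : 0 ≤ ∫ x in Channels a L α (ε 0), |pd2 (uu 0) x| :=
      integral_nonneg fun x => abs_nonneg _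
    have he := hεpos 0
    have h1 : (0:ℝ) ≤ 1 / (ε 0) ^ 2 := by positivity
    exact mul_nonneg h1 h0
  have hCL : 0 ≤ C / L := div_nonneg hC0 hL.le
  obtain ⟨N₀, hN₀⟩ := eventually_atTop.mp
    (hεlim.eventually_lt_const (show (0:ℝ) < 1/(α+1) by positivity))
  have hsub : ∀ n, N₀ ≤ n → Channels a L α (ε n) ⊆ KK a b L V := fun n hn =>
    channels_subset_KK hb hL hV hα (hεpos n) (hadm n).2 (hN₀ n hn).le
  have hpd2 : ∀ n, N₀ ≤ n → IntegrableOn (pd2 (uu n)) (Channels a L α (ε n)) volume :=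
    fun n hn => integrableOn_pd2 (hsub n hn) (hsol n).1
  have hflE : ∀ n, ∫ x in Channels a L α (ε n), |pd2 (uu n) x| ≤ C * (ε n)^2 := by
    intro n
    have h := hflux n
    have he := hεpos n
    have he2 : (0:ℝ) < (ε n)^2 := by positivity
    have h2 := mul_le_mul_of_nonneg_left h he2.le
    have h3 : (ε n)^2 * ((1/(ε n)^2) * ∫ x in Channels a L α (ε n), |pd2 (uu n) x|)
        = ∫ x in Channels a L α (ε n), |pd2 (uu n) x| := by
      field_simp
    rw [h3] at h2; linarith
  have key : ∀ n, N₀ ≤ n → ∀ ψ : C(↥(KK a b L V), ℝ),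
      |Lam a b L V α (ε n) (uu n) ψ| ≤ (C/L) * ‖ψ‖ := fun n hn ψ =>
    Lam_abs_le hL (hεpos n) (hsub n hn) (hpd2 n hn) (hflE n) ψ (norm_nonneg ψ)
      (fun x _ => extK_bound ψ x)
  have key2 : ∀ n, N₀ ≤ n → ∀ ψ χ : C(↥(KK a b L V), ℝ),
      |Lam a b L V α (ε n) (uu n) ψ - Lam a b L V α (ε n) (uu n) χ| ≤ (C/L) * dist ψ χ := by
    intro n hn ψ χ
    rw [← Lam_sub (hsub n hn) (hpd2 n hn), dist_eq_norm]
    exact key n hn (ψ - χ)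
  haveI : Nonempty C(↥(KK a b L V), ℝ) := ⟨0⟩
  set ψs : ℕ → C(↥(KK a b L V), ℝ) := TopologicalSpace.denseSeq _ with hψs
  have hdense : DenseRange ψs := TopologicalSpace.denseRange_denseSeq _
  set F : ℕ → (ℕ → ℝ) := fun n k => Lam a b L V α (ε (N₀ + n)) (uu (N₀ + n)) (ψs k) with hF
  have hFmem : ∀ n, F n ∈ Set.univ.pi
      (fun k => Icc (-((C/L) * ‖ψs k‖)) ((C/L) * ‖ψs k‖)) := by
    intro n k _
    exact abs_le.mp (key (N₀ + n) (Nat.le_add_right _ _) (ψs k))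
  have hScomp : IsSeqCompact (Set.univ.pi
      (fun k : ℕ => Icc (-((C/L) * ‖ψs k‖)) ((C/L) * ‖ψs k‖))) :=
    (isCompact_univ_pi fun k => isCompact_Icc).isSeqCompact
  obtain ⟨g, -, σ', hσ', hgconv⟩ := hScomp hFmem
  set σ : ℕ → ℕ := fun n => N₀ + σ' n with hσdef
  have hσmono : StrictMono σ := fun i j h => by
    have := hσ' h; simp only [hσdef]; omega
  have hσge : ∀ n, N₀ ≤ σ n := fun n => Nat.le_add_right _ _
  have hconv' : ∀ k, Tendsto (fun n => Lam a b L V α (ε (σ n)) (uu (σ n)) (ψs k))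
      atTop (𝓝 (g k)) := by
    intro k
    exact tendsto_pi_nhds.mp hgconv k
  have hcauchy : ∀ ψ : C(↥(KK a b L V), ℝ),
      CauchySeq (fun n => Lam a b L V α (ε (σ n)) (uu (σ n)) ψ) := by
    intro ψ
    rw [Metric.cauchySeq_iff]
    intro δ hδ
    have hδ4 : 0 < δ / (4 * (C/L + 1)) := by positivity
    obtain ⟨k, hk⟩ := hdense.exists_dist_lt ψ hδ4
    have hck : CauchySeq (fun n => Lam a b L V α (ε (σ n)) (uu (σ n)) (ψs k)) :=
      (hconv' k).cauchySeq
    obtain ⟨N, hN⟩ := Metric.cauchySeq_iff.mp hck (δ/2) (by linarith)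
    refine ⟨N, fun m hm n hn => ?_⟩
    have e1 := key2 (σ m) (hσge m) ψ (ψs k)
    have e2 := key2 (σ n) (hσge n) ψ (ψs k)
    have hsmall : (C/L) * dist ψ (ψs k) < δ/4 := by
      have hd0 : 0 ≤ dist ψ (ψs k) := dist_nonneg
      calc (C/L) * dist ψ (ψs k) ≤ (C/L + 1) * dist ψ (ψs k) := by nlinarith
        _ < (C/L + 1) * (δ/(4*(C/L+1))) := by
            exact mul_lt_mul_of_pos_left hk (by positivity)
        _ = δ/4 := by field_simp
    have h2 := hN m hm n hn
    rw [Real.dist_eq] at h2 ⊢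
    have t1 := abs_sub_le (Lam a b L V α (ε (σ m)) (uu (σ m)) ψ)
      (Lam a b L V α (ε (σ m)) (uu (σ m)) (ψs k)) (Lam a b L V α (ε (σ n)) (uu (σ n)) ψ)
    have t2 := abs_sub_le (Lam a b L V α (ε (σ m)) (uu (σ m)) (ψs k))
      (Lam a b L V α (ε (σ n)) (uu (σ n)) (ψs k)) (Lam a b L V α (ε (σ n)) (uu (σ n)) ψ)
    have e2' : |Lam a b L V α (ε (σ n)) (uu (σ n)) (ψs k)
        - Lam a b L V α (ε (σ n)) (uu (σ n)) ψ| ≤ (C/L) * dist ψ (ψs k) := by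
      rw [abs_sub_comm]; exact e2
    linarith
  have hlimEx : ∀ ψ : C(↥(KK a b L V), ℝ), ∃ l,
      Tendsto (fun n => Lam a b L V α (ε (σ n)) (uu (σ n)) ψ) atTop (𝓝 l) := fun ψ =>
    cauchySeq_tendsto_of_complete (hcauchy ψ)
  choose Jf hJ using hlimEx
  have hadd : ∀ ψ χ, Jf (ψ + χ) = Jf ψ + Jf χ := by
    intro ψ χ
    refine tendsto_nhds_unique (hJ (ψ + χ)) ?_
    refine Tendsto.congr (fun n => ?_) ((hJ ψ).add (hJ χ))
    exact (Lam_add (hsub (σ n) (hσge n)) (hpd2 (σ n) (hσge n)) ψ χ).symm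
  have hsmul : ∀ (r : ℝ) ψ, Jf (r • ψ) = r * Jf ψ := by
    intro r ψ
    refine tendsto_nhds_unique (hJ (r • ψ)) ?_
    refine Tendsto.congr (fun n => ?_) ((hJ ψ).const_mul r)
    exact (Lam_smul a b L V α (ε (σ n)) (uu (σ n)) r ψ).symm
  refine ⟨σ, hσmono,
    ⟨⟨Jf, hadd⟩, fun r ψ => by simpa using hsmul r ψ⟩, ?_, ?_, ?_⟩
  · -- norm bound
    intro ψ
    have hb1 : ∀ n, |Lam a b L V α (ε (σ n)) (uu (σ n)) ψ| ≤ (C/L) * ‖ψ‖ :=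
      fun n => key (σ n) (hσge n) ψ
    have hT : Tendsto (fun n => |Lam a b L V α (ε (σ n)) (uu (σ n)) ψ|)
        atTop (𝓝 |Jf ψ|) := (hJ ψ).abs
    have hle : |Jf ψ| ≤ (C/L) * ‖ψ‖ := le_of_tendsto hT (Eventually.of_forall hb1)
    have hs := iSup_abs_eq_norm ψ
    calc |Jf ψ| ≤ (C/L) * ‖ψ‖ := hle
      _ = (C/L) * ⨆ x : ↥(KK a b L V), |ψ x| := by rw [hs]
  · -- convergence
    intro φ hφ
    refine Tendsto.congr (fun n => ?_)
      (hJ (ContinuousMap.restrict (KK a b L V) ⟨φ, hφ⟩))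
    exact (integral_indicator_eq_Lam (hsub (σ n) (hσge n)) φ hφ).symm
  · -- support on the boundary segment
    intro ψ hψ0
    refine tendsto_nhds_unique (hJ ψ) ?_
    rw [Metric.tendsto_atTop]
    intro δ hδpos
    have hδ₀ : 0 < δ / (2 * (C/L + 1)) := by positivity
    have huc : UniformContinuous (⇑ψ : ↥(KK a b L V) → ℝ) :=
      CompactSpace.uniformContinuous_of_continuous ψ.continuous
    obtain ⟨η, hη, hmod⟩ := Metric.uniformContinuous_iff.mp huc _ hδ₀
    have hεσ : Tendsto (fun n => L * ε (σ n)) atTop (𝓝 0) := by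
      have h1 : Tendsto (fun n => ε (σ n)) atTop (𝓝 0) :=
        hεlim.comp hσmono.tendsto_atTop
      simpa using h1.const_mul L
    obtain ⟨N₁, hN₁⟩ := eventually_atTop.mp (hεσ.eventually_lt_const hη)
    refine ⟨N₁, fun n hn => ?_⟩
    rw [Real.dist_eq, sub_zero]
    have hbound : ∀ x ∈ Channels a L α (ε (σ n)),
        |extK a b L V ψ x| ≤ δ / (2 * (C/L + 1)) := by
      intro x hx
      have hxK := hsub (σ n) (hσge n) hx
      have hx2 := channels_snd_mem hx
      have hq : (x.1, (0:ℝ)) ∈ KK a b L V := by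
        refine ⟨hxK.1, ?_, ?_⟩ <;> simp <;> [linarith; linarith]
      have hdist : dist (⟨x, hxK⟩ : ↥(KK a b L V)) ⟨(x.1, 0), hq⟩ < η := by
        rw [Subtype.dist_eq, Prod.dist_eq]
        have hx2' : |x.2| ≤ L * ε (σ n) := by
          rw [abs_of_nonneg hx2.1]; exact hx2.2
        have hd2 : dist x.2 (0:ℝ) < η := by
          rw [Real.dist_eq, sub_zero]
          exact lt_of_le_of_lt hx2' (hN₁ n hn)
        have hd1 : dist x.1 x.1 < η := by simpa using hη
        simpa using max_lt hd1 hd2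
      have hval := hmod hdist
      rw [hψ0 ⟨(x.1, 0), hq⟩ rfl, Real.dist_eq, sub_zero] at hval
      have hext : extK a b L V ψ x = ψ ⟨x, hxK⟩ := by
        unfold extK; rw [dif_pos hxK]

      rw [hext]
      exact hval.le
    have hb2 : |Lam a b L V α (ε (σ n)) (uu (σ n)) ψ| ≤ (C/L) * (δ / (2 * (C/L + 1))) :=
      Lam_abs_le hL (hεpos _) (hsub _ (hσge n)) (hpd2 _ (hσge n)) (hflE _) ψ hδ₀.le hbound
    have harith : (C/L) * (δ / (2 * (C/L + 1))) < δ := by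
      have h1 : (C/L) * (δ / (2 * (C/L + 1))) ≤ (C/L + 1) * (δ / (2 * (C/L + 1))) := by
        nlinarith
      have h2 : (C/L + 1) * (δ / (2 * (C/L + 1))) = δ / 2 := by
        field_simp
      linarith
    linarith
end
end

section
/- L² bound for the cell averages below the channels. Let 0 ≤ c < d ≤ a be fixed and let Y_U := (0,1)×(−1,0). Suppose the functions u^{ε_n} are C¹ on a neighborhood of the closure of Ω_{ε_n} and satisfy the uniform H¹ bound ∫_{Ω_{ε_n}} (|u^{ε_n}|² + |∇u^{ε_n}|²) ≤ M for all n. Define U^{ε}(y₁,y₂) := (1/|K_ε|) Σ_{k ∈ K_ε} u^{ε}(ε(k+y₁), ε y₂) for (y₁,y₂) ∈ Y_U, where |K_ε| denotes the cardinality of K_ε. Then the restrictions U^{ε_n}|_{Y_U} are uniformly bounded in L²(Y_U): there is a constant C, depending only on a, b, c, d and M, with ∫_{Y_U} |U^{ε_n}(y)|² dy ≤ C for all n. -/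
open MeasureTheory Set Filter Topology

noncomputable section

open Classical in
/-- Index set `K_ε = { k ∈ ℕ : kε ∈ [0, a−ε] and (kε, kε+ε) ∩ [c,d] ≠ ∅ }`. -/
def Kset (a c d ε : ℝ) : Finset ℕ :=
  (Finset.range (⌊a / ε⌋₊ + 1)).filter fun k =>
    (k : ℝ) * ε ∈ Icc 0 (a - ε) ∧
      (Ioo ((k : ℝ) * ε) ((k : ℝ) * ε + ε) ∩ Icc c d).Nonempty

/-- Cell average `U^ε(y) = (1/|K_ε|) Σ_{k ∈ K_ε} u^ε(ε(k+y₁), ε y₂)`. -/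
def Uav (a c d ε : ℝ) (uε : ℝ × ℝ → ℝ) (y : ℝ × ℝ) : ℝ :=
  (1 / ((Kset a c d ε).card : ℝ)) *
    ∑ k ∈ Kset a c d ε, uε (ε * ((k : ℝ) + y.1), ε * y.2)

/-- The lower bulk part `Y_U = (0,1) × (−1,0)` of the unit cell. -/
def Ybelow : Set (ℝ × ℝ) := Ioo (0:ℝ) 1 ×ˢ Ioo (-1:ℝ) 0

/-- The upper bulk part `Y_V = (0,1) × (L, L+V)` of the unit cell. -/
def Yabove (L V : ℝ) : Set (ℝ × ℝ) := Ioo (0:ℝ) 1 ×ˢ Ioo L (L + V)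


section AuxiliaryLemmas

lemma trace_bound_aux {u : ℝ × ℝ → ℝ} {U : Set (ℝ × ℝ)} (hUo : IsOpen U)
    (hu : ContDiffOn ℝ 1 u U) {b : ℝ} (hb : 0 < b) {x₁ x₂ : ℝ}
    (hseg : ∀ s ∈ Icc (-b) (0:ℝ), (x₁, s) ∈ U) (hx₂ : x₂ ∈ Icc (-b) (0:ℝ)) :
    u (x₁, x₂) ^ 2 ≤ (1/b + 1) * ∫ s in Ioo (-b) (0:ℝ), (u (x₁, s) ^ 2 + (pd2 u (x₁, s)) ^ 2) := by
  set h : ℝ → ℝ := fun s => u (x₁, s) with hh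
  set h' : ℝ → ℝ := fun s => pd2 u (x₁, s) with hh'
  set J : ℝ := ∫ s in Ioo (-b) (0:ℝ), (h s ^ 2 + h' s ^ 2) with hJ
  have hderiv : ∀ s ∈ Icc (-b) (0:ℝ), HasDerivAt h (h' s) s := by
    intro s hs
    have hdiff : DifferentiableAt ℝ u (x₁, s) :=
      (hu.differentiableOn one_ne_zero).differentiableAt (hUo.mem_nhds (hseg s hs))
    have hline : HasDerivAt (fun s : ℝ => ((x₁ : ℝ), s)) ((0:ℝ), (1:ℝ)) s :=
      (hasDerivAt_const s x₁).prodMk (hasDerivAt_id s)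
    exact hdiff.hasFDerivAt.comp_hasDerivAt s hline
  have hfc : ContinuousOn (fderiv ℝ u) U := hu.continuousOn_fderiv_of_isOpen hUo le_rfl
  have hline_cont : ContinuousOn (fun s : ℝ => ((x₁ : ℝ), s)) (Icc (-b) (0:ℝ)) :=
    (continuous_const.prodMk continuous_id).continuousOn
  have hmaps : MapsTo (fun s : ℝ => ((x₁ : ℝ), s)) (Icc (-b) (0:ℝ)) U := fun s hs => hseg s hs
  have hcont' : ContinuousOn h' (Icc (-b) (0:ℝ)) := by
    have : ContinuousOn (fun s : ℝ => fderiv ℝ u (x₁, s)) (Icc (-b) (0:ℝ)) :=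
      hfc.comp hline_cont hmaps
    exact this.clm_apply continuousOn_const
  have hcont : ContinuousOn h (Icc (-b) (0:ℝ)) :=
    (hu.continuousOn).comp hline_cont hmaps
  have hJ0 : 0 ≤ J := integral_nonneg (fun s => by positivity)
  have hIcc_int : IntegrableOn (fun s => h s ^ 2 + h' s ^ 2) (Icc (-b) (0:ℝ)) :=
    ((hcont.pow 2).add (hcont'.pow 2)).integrableOn_compact isCompact_Icc
  have key : ∀ t ∈ Icc (-b) (0:ℝ), h x₂ ^ 2 ≤ h t ^ 2 + J := by
    intro t ht
    have hsub : uIcc t x₂ ⊆ Icc (-b) (0:ℝ) := uIcc_subset_Icc ht hx₂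
    have hq : ∀ s ∈ uIcc t x₂, HasDerivAt (fun s => h s ^ 2) (2 * h s * h' s) s := by
      intro s hs
      have := (hderiv s (hsub hs)).fun_pow 2
      simpa [mul_comm, mul_assoc] using this
    have hpc : ContinuousOn (fun s => 2 * h s * h' s) (Icc (-b) (0:ℝ)) :=
      (continuousOn_const.mul hcont).mul hcont'
    have hint : IntervalIntegrable (fun s => 2 * h s * h' s) volume t x₂ :=
      (hpc.mono hsub).intervalIntegrable
    have heq : h x₂ ^ 2 - h t ^ 2 = ∫ s in t..x₂, 2 * h s * h' s :=
      (intervalIntegral.integral_eq_sub_of_hasDerivAt hq hint).symm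
    have habs : |∫ s in t..x₂, 2 * h s * h' s| ≤ J := by
      have h1 : |∫ s in t..x₂, 2 * h s * h' s| ≤ ∫ s in uIoc t x₂, 2 * |h s| * |h' s| := by
        have := intervalIntegral.norm_integral_le_integral_norm_uIoc (a := t) (b := x₂)
          (f := fun s => 2 * h s * h' s) (μ := volume)
        simpa [Real.norm_eq_abs, abs_mul] using this
      have hAc : ContinuousOn (fun s => 2 * |h s| * |h' s|) (Icc (-b) (0:ℝ)) :=
        (continuousOn_const.mul hcont.abs).mul hcont'.abs
      have h2 : ∫ s in uIoc t x₂, 2 * |h s| * |h' s| ≤ ∫ s in Icc (-b) (0:ℝ), 2 * |h s| * |h' s| := by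
        apply setIntegral_mono_set
        · exact hAc.integrableOn_compact isCompact_Icc
        · exact Filter.Eventually.of_forall fun s => by positivity
        · exact HasSubset.Subset.eventuallyLE ((uIoc_subset_uIcc).trans hsub)
      have h3 : ∫ s in Icc (-b) (0:ℝ), 2 * |h s| * |h' s|
          ≤ ∫ s in Icc (-b) (0:ℝ), (h s ^ 2 + h' s ^ 2) := by
        apply setIntegral_mono_on (hAc.integrableOn_compact isCompact_Icc) hIcc_int
          measurableSet_Icc
        intro s _
        calc 2 * |h s| * |h' s| ≤ |h s| ^ 2 + |h' s| ^ 2 := two_mul_le_add_sq _ _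
          _ = h s ^ 2 + h' s ^ 2 := by rw [sq_abs, sq_abs]
      have h4 : ∫ s in Icc (-b) (0:ℝ), (h s ^ 2 + h' s ^ 2) = J := integral_Icc_eq_integral_Ioo
      linarith
    have := abs_le.mp habs
    linarith [heq ▸ this.2]
  have hfin : volume (Ioo (-b) (0:ℝ)) < ⊤ := measure_Ioo_lt_top
  have hconst_int : IntegrableOn (fun _ : ℝ => J) (Ioo (-b) (0:ℝ)) :=
    integrableOn_const hfin.ne
  have hconst_int2 : IntegrableOn (fun _ : ℝ => h x₂ ^ 2) (Ioo (-b) (0:ℝ)) :=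
    integrableOn_const hfin.ne
  have hIoo_int : IntegrableOn (fun s => h s ^ 2 + h' s ^ 2) (Ioo (-b) (0:ℝ)) :=
    hIcc_int.mono_set Ioo_subset_Icc_self
  have hmeas : (volume (Ioo (-b) (0:ℝ))).toReal = b := by
    rw [Real.volume_Ioo]; rw [ENNReal.toReal_ofReal (by linarith)]; ring
  have havg : b * h x₂ ^ 2 ≤ ∫ t in Ioo (-b) (0:ℝ), (h t ^ 2 + h' t ^ 2 + J) := by
    have hconst : ∫ _ in Ioo (-b) (0:ℝ), h x₂ ^ 2 = b * h x₂ ^ 2 := by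
      rw [setIntegral_const, measureReal_def, hmeas, smul_eq_mul]
    rw [← hconst]
    refine setIntegral_mono_on hconst_int2 (hIoo_int.add hconst_int) measurableSet_Ioo ?_
    intro t ht
    have := key t (Ioo_subset_Icc_self ht)
    nlinarith [sq_nonneg (h' t)]
  have hsplit : ∫ t in Ioo (-b) (0:ℝ), (h t ^ 2 + h' t ^ 2 + J) = J + b * J := by
    rw [integral_add hIoo_int hconst_int, setIntegral_const, measureReal_def, hmeas, smul_eq_mul]
  rw [hsplit] at havg
  have hfinal : h x₂ ^ 2 ≤ (J + b * J) / b := (le_div_iff₀ hb).mpr (by linarith)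
  calc u (x₁, x₂) ^ 2 = h x₂ ^ 2 := rfl
    _ ≤ (J + b * J) / b := hfinal
    _ = (1/b + 1) * J := by field_simp

lemma Kset_subset_facts {a c d ε : ℝ} {k : ℕ} (hk : k ∈ Kset a c d ε) :
    0 ≤ (k : ℝ) * ε ∧ (k : ℝ) * ε + ε ≤ a := by
  classical
  rw [Kset, Finset.mem_filter] at hk
  obtain ⟨-, hmem, -⟩ := hk
  exact ⟨hmem.1, by linarith [hmem.2]⟩

lemma Kset_card_lb {a c d ε : ℝ} (hε : 0 < ε) (hc : 0 ≤ c) (hcd : c < d) (hd : d ≤ a)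
    (hε2 : 4 * ε ≤ d - c) :
    (d - c) / (2 * ε) ≤ ((Kset a c d ε).card : ℝ) := by
  classical
  set k₀ : ℕ := ⌈c / ε⌉₊ with hk₀def
  set k₁ : ℕ := ⌊d / ε⌋₊ with hk₁def
  have hc0 : (0:ℝ) ≤ c / ε := div_nonneg hc hε.le
  have hd0 : (0:ℝ) ≤ d / ε := div_nonneg (by linarith) hε.le
  have hk₀u : (k₀ : ℝ) < c / ε + 1 := Nat.ceil_lt_add_one hc0
  have hk₀l : c / ε ≤ (k₀ : ℝ) := Nat.le_ceil _
  have hk₁l : d / ε - 1 < (k₁ : ℝ) := Nat.sub_one_lt_floor _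
  have hk₁u : (k₁ : ℝ) ≤ d / ε := Nat.floor_le hd0
  have hdc : 4 ≤ (d - c) / ε := by rw [le_div_iff₀ hε]; linarith
  have hsplit : (d - c)/ε = d/ε - c/ε := by ring
  have hdiff : c / ε + 4 ≤ d / ε := by linarith
  have hk₀k₁ : k₀ < k₁ := by exact_mod_cast (by linarith : (k₀ : ℝ) < (k₁ : ℝ))
  have hsub : Finset.Ico k₀ k₁ ⊆ Kset a c d ε := by
    intro k hk
    rw [Finset.mem_Ico] at hk
    have hkl : c / ε ≤ (k : ℝ) := le_trans hk₀l (by exact_mod_cast hk.1)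
    have hku : (k : ℝ) + 1 ≤ d / ε := by
      have : ((k+1 : ℕ) : ℝ) ≤ (k₁ : ℝ) := by exact_mod_cast hk.2
      push_cast at this; linarith
    have hck : c ≤ (k : ℝ) * ε := by
      rw [div_le_iff₀ hε] at hkl; linarith
    have hkd : (k : ℝ) * ε + ε ≤ d := by
      have h5 := (le_div_iff₀ hε).mp hku
      nlinarith
    rw [Kset, Finset.mem_filter]
    refine ⟨?_, ⟨le_trans hc hck, by linarith⟩,
      ⟨(k:ℝ)*ε + ε/2, ⟨by linarith, by linarith⟩, by constructor <;> linarith⟩⟩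
    rw [Finset.mem_range]
    have hka : (k : ℝ) ≤ a / ε := (le_div_iff₀ hε).mpr (by linarith)
    have : k ≤ ⌊a / ε⌋₊ := Nat.le_floor hka
    omega
  have hcard : (k₁ - k₀ : ℕ) ≤ (Kset a c d ε).card := by
    calc (k₁ - k₀ : ℕ) = (Finset.Ico k₀ k₁).card := (Nat.card_Ico k₀ k₁).symm
      _ ≤ _ := Finset.card_le_card hsub
  have hcast : ((k₁ - k₀ : ℕ) : ℝ) = (k₁ : ℝ) - k₀ := by
    rw [Nat.cast_sub hk₀k₁.le]
  have hhalf : (d - c) / (2 * ε) = ((d - c)/ε)/2 := by ring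
  have h1 : (d - c) / (2 * ε) ≤ (k₁ : ℝ) - k₀ := by rw [hhalf]; linarith
  calc (d - c) / (2 * ε) ≤ ((k₁ - k₀ : ℕ) : ℝ) := by rw [hcast]; exact h1
    _ ≤ _ := by exact_mod_cast hcard

lemma cell_coord_bounds {a ε k y1 : ℝ} (hε : 0 < ε) (h1 : 0 ≤ k * ε) (h2 : k * ε + ε ≤ a)
    (hy1l : 0 ≤ y1) (hy1u : y1 ≤ 1) : 0 ≤ ε * (k + y1) ∧ ε * (k + y1) ≤ a := by
  constructor <;> nlinarith

lemma cell_coord2_bounds {b ε y2 : ℝ} (hε : 0 < ε) (hεb : ε ≤ b)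
    (hy2l : -1 ≤ y2) (hy2u : y2 ≤ 0) : -b ≤ ε * y2 ∧ ε * y2 ≤ 0 := by
  constructor <;> nlinarith

set_option maxHeartbeats 2000000 in
lemma small_eps_bound (a b L V α : ℝ) (ha : 0 < a) (hb : 0 < b) (hL : 0 < L) (hV : 0 < V)
    (hα : 0 < α) (c d : ℝ) (hc : 0 ≤ c) (hcd : c < d) (hd : d ≤ a)
    (ε : ℝ) (hε : 0 < ε) (hεb : ε ≤ b) (hε2 : 4 * ε ≤ d - c)
    (u : ℝ × ℝ → ℝ) (hreg : C1Nhd u (OmegaEps a b L V α ε))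
    (M : ℝ) (hbdd : ∫ x in OmegaEps a b L V α ε, (u x ^ 2 + dot (grad u x) (grad u x)) ≤ M) :
    ∫ y in Ybelow, (Uav a c d ε u y) ^ 2 ≤ (1/b + 1) * (2 / (d - c)) * M := by
  obtain ⟨U, hUo, hUcl, huC1⟩ := hreg
  have hΩ0sub : Omega0 a b ⊆ OmegaEps a b L V α ε :=
    subset_union_left.trans subset_union_left
  have hQcl : Icc 0 a ×ˢ Icc (-b) (0:ℝ) = closure (Omega0 a b) := by
    rw [Omega0, closure_prod_eq, closure_Ioo ha.ne, closure_Ioo (by linarith : (-b) ≠ (0:ℝ))]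
  have hQU : Icc 0 a ×ˢ Icc (-b) (0:ℝ) ⊆ U := by
    rw [hQcl]
    exact (closure_mono hΩ0sub).trans hUcl
  have hucont : ContinuousOn u U := huC1.continuousOn
  have hfc : ContinuousOn (fderiv ℝ u) U := huC1.continuousOn_fderiv_of_isOpen hUo le_rfl
  have hpd1 : ContinuousOn (pd1 u) U := by
    have : ContinuousOn (fun x => fderiv ℝ u x ((1:ℝ), (0:ℝ))) U :=
      hfc.clm_apply continuousOn_const
    exact this
  have hpd2 : ContinuousOn (pd2 u) U := by
    have : ContinuousOn (fun x => fderiv ℝ u x ((0:ℝ), (1:ℝ))) U :=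
      hfc.clm_apply continuousOn_const
    exact this
  set F : ℝ × ℝ → ℝ := fun x => u x ^ 2 + (pd2 u x) ^ 2 with hFdef
  set G : ℝ → ℝ := fun t => ∫ s in Ioo (-b) (0:ℝ), F (t, s) with hGdef
  have hFcont : ContinuousOn F U := (hucont.pow 2).add (hpd2.pow 2)
  have hFnonneg : ∀ x, 0 ≤ F x := fun x => add_nonneg (sq_nonneg _) (sq_nonneg _)
  have hGnonneg : ∀ t, 0 ≤ G t := fun t => integral_nonneg fun s => hFnonneg _
  -- The full integrand W
  set W : ℝ × ℝ → ℝ := fun x => u x ^ 2 + dot (grad u x) (grad u x) with hWdef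
  have hWeq : ∀ x, W x = u x ^ 2 + ((pd1 u x) ^ 2 + (pd2 u x) ^ 2) := by
    intro x
    simp only [hWdef, dot, grad]
    ring
  have hWnonneg : ∀ x, 0 ≤ W x := fun x => by rw [hWeq]; positivity
  have hWcont : ContinuousOn W U := by
    have h1 : ContinuousOn (fun x => u x ^ 2 + ((pd1 u x) ^ 2 + (pd2 u x) ^ 2)) U :=
      (hucont.pow 2).add ((hpd1.pow 2).add (hpd2.pow 2))
    exact h1.congr fun x _ => (hWeq x)
  -- Omega_eps is bounded
  have hε3 : (0:ℝ) < ε ^ 3 := pow_pos hε 3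
  have hαε : (0:ℝ) < α * ε ^ 3 := mul_pos hα hε3
  have hLVε : (0:ℝ) < (L + V) * ε := by positivity
  have hLε : (0:ℝ) < L * ε := by positivity
  have hLLV : L * ε ≤ (L + V) * ε := by nlinarith
  have hΩbnd : OmegaEps a b L V α ε ⊆ Icc 0 (a + α * ε ^ 3) ×ˢ Icc (-b) ((L + V) * ε) := by
    rintro ⟨x1, x2⟩ hx
    rcases hx with (hx | hx) | hx
    · obtain ⟨h1, h2⟩ := hx
      simp only at h1 h2
      exact ⟨⟨h1.1.le, by linarith [h1.2]⟩, ⟨h2.1.le, by linarith [h2.2]⟩⟩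
    · obtain ⟨h1, h2⟩ := hx
      simp only at h1 h2
      refine ⟨⟨h1.1.le, by linarith [h1.2]⟩, ⟨?_, h2.2.le⟩⟩
      linarith [h2.1]
    · simp only [Channels, mem_iUnion, exists_prop] at hx
      obtain ⟨k, hk, h1, h2⟩ := hx
      rw [Finset.mem_range] at hk
      have hka : (k : ℝ) ≤ a / ε := le_trans (by exact_mod_cast hk.le) (Nat.floor_le
        (div_nonneg ha.le hε.le))
      have hkε : (k : ℝ) * ε ≤ a := by
        rw [le_div_iff₀ hε] at hka; linarith
      constructor
      · constructor
        · have : (0:ℝ) ≤ (k : ℝ) * ε := mul_nonneg (Nat.cast_nonneg k) hε.le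
          linarith [h1.1]
        · linarith [h1.2]
      · constructor
        · linarith [h2.1]
        · have : L * ε ≤ (L + V) * ε := by nlinarith
          linarith [h2.2]
  have hΩcomp : IsCompact (closure (OmegaEps a b L V α ε)) := by
    refine (isCompact_Icc.prod isCompact_Icc).of_isClosed_subset isClosed_closure
      (closure_minimal hΩbnd ((isClosed_Icc.prod isClosed_Icc)))
  have hWint : IntegrableOn W (OmegaEps a b L V α ε) :=
    ((hWcont.mono hUcl).integrableOn_compact hΩcomp).mono_set subset_closure
  have hQcomp : IsCompact (Icc (0:ℝ) a ×ˢ Icc (-b) (0:ℝ)) := isCompact_Icc.prod isCompact_Icc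
  have hΩ0Q : Omega0 a b ⊆ Icc 0 a ×ˢ Icc (-b) (0:ℝ) :=
    prod_mono Ioo_subset_Icc_self Ioo_subset_Icc_self
  have hFintQ : IntegrableOn F (Omega0 a b) :=
    ((hFcont.mono hQU).integrableOn_compact hQcomp).mono_set hΩ0Q
  have hWintΩ0 : IntegrableOn W (Omega0 a b) :=
    ((hWcont.mono hQU).integrableOn_compact hQcomp).mono_set hΩ0Q
  have hΩ0meas : MeasurableSet (Omega0 a b) :=
    (measurableSet_Ioo.prod measurableSet_Ioo)
  -- Fubini for F on Omega0
  have hFprod : Integrable F (((volume : Measure ℝ).restrict (Ioo 0 a)).prod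
      ((volume : Measure ℝ).restrict (Ioo (-b) (0:ℝ)))) := by
    rw [Measure.prod_restrict]
    exact hFintQ
  have hGint : IntegrableOn G (Ioo 0 a) := hFprod.integral_prod_left
  have hFprod2 : IntegrableOn F (Ioo 0 a ×ˢ Ioo (-b) (0:ℝ))
      (((volume : Measure ℝ)).prod (volume : Measure ℝ)) := by
    rw [IntegrableOn, ← Measure.prod_restrict]
    exact hFprod
  have hGeq : ∫ t in Ioo 0 a, G t = ∫ x in Omega0 a b, F x := by
    have := MeasureTheory.setIntegral_prod (μ := (volume : Measure ℝ))
      (ν := (volume : Measure ℝ)) F (s := Ioo 0 a) (t := Ioo (-b) (0:ℝ)) hFprod2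
    exact this.symm
  -- integral of F over Omega0 is at most M
  have hFM : ∫ x in Omega0 a b, F x ≤ M := by
    have h1 : ∫ x in Omega0 a b, F x ≤ ∫ x in Omega0 a b, W x := by
      apply setIntegral_mono_on hFintQ hWintΩ0 hΩ0meas
      intro x _
      rw [hWeq]
      show u x ^ 2 + pd2 u x ^ 2 ≤ _
      nlinarith [sq_nonneg (pd1 u x)]
    have h2 : ∫ x in Omega0 a b, W x ≤ ∫ x in OmegaEps a b L V α ε, W x := by
      apply setIntegral_mono_set hWint (Filter.Eventually.of_forall hWnonneg)
        (HasSubset.Subset.eventuallyLE hΩ0sub)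
    exact (h1.trans h2).trans hbdd
  have hM0 : 0 ≤ M := le_trans (integral_nonneg hWnonneg) hbdd
  -- cells and their disjointness
  set K := Kset a c d ε with hKdef
  have hcell_sub : ∀ k ∈ K, Ioo (ε * (k:ℝ)) (ε * (k:ℝ) + ε) ⊆ Ioo 0 a := by
    intro k hk x hx
    obtain ⟨h1, h2⟩ := Kset_subset_facts hk
    constructor
    · calc (0:ℝ) ≤ ε * (k:ℝ) := by nlinarith [h1]
        _ < x := hx.1
    · calc x < ε * (k:ℝ) + ε := hx.2
        _ ≤ a := by nlinarith [h2]
  have hdisj2 : ∀ k l : ℕ, k < l →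
      Disjoint (Ioo (ε * (k:ℝ)) (ε * (k:ℝ) + ε)) (Ioo (ε * (l:ℝ)) (ε * (l:ℝ) + ε)) := by
    intro k l hkl
    apply Set.disjoint_left.mpr
    intro x hxk hxl
    have hcast : (k:ℝ) + 1 ≤ (l:ℝ) := by exact_mod_cast hkl
    have h1 : x < ε * (l:ℝ) := lt_of_lt_of_le hxk.2 (by nlinarith)
    exact absurd hxl.1 (not_lt.mpr h1.le)
  have hpairwise : (↑K : Set ℕ).Pairwise
      (Function.onFun Disjoint fun k => Ioo (ε * (k:ℝ)) (ε * (k:ℝ) + ε)) := by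
    intro k _ l _ hne
    rcases lt_or_gt_of_ne hne with h | h
    · exact hdisj2 k l h
    · exact (hdisj2 l k h).symm
  have hsum_le : ∑ k ∈ K, ∫ t in Ioo (ε * (k:ℝ)) (ε * (k:ℝ) + ε), G t ≤ ∫ t in Ioo 0 a, G t := by
    rw [← MeasureTheory.integral_biUnion_finset K (fun k _ => measurableSet_Ioo) hpairwise
      (fun k hk => hGint.mono_set (hcell_sub k hk))]
    apply setIntegral_mono_set hGint (Filter.Eventually.of_forall hGnonneg)
      (HasSubset.Subset.eventuallyLE (iUnion₂_subset hcell_sub))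
  -- integrability of summands on Ybelow
  have hmapsU : ∀ k ∈ K, ∀ y ∈ Icc (0:ℝ) 1 ×ˢ Icc (-1:ℝ) 0,
      (ε * ((k:ℝ) + y.1), ε * y.2) ∈ U := by
    intro k hk y hy
    obtain ⟨h1, h2⟩ := Kset_subset_facts hk
    obtain ⟨hy1, hy2⟩ := hy
    apply hQU
    exact ⟨cell_coord_bounds hε h1 h2 hy1.1 hy1.2, cell_coord2_bounds hε hεb hy2.1 hy2.2⟩
  have hYsub : Ybelow ⊆ Icc (0:ℝ) 1 ×ˢ Icc (-1:ℝ) 0 :=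
    prod_mono Ioo_subset_Icc_self Ioo_subset_Icc_self
  have hYcomp : IsCompact (Icc (0:ℝ) 1 ×ˢ Icc (-1:ℝ) 0) := isCompact_Icc.prod isCompact_Icc
  have hYmeas : MeasurableSet Ybelow := measurableSet_Ioo.prod measurableSet_Ioo
  have huint : ∀ k ∈ K, IntegrableOn
      (fun y : ℝ × ℝ => (u (ε * ((k:ℝ) + y.1), ε * y.2)) ^ 2) Ybelow := by
    intro k hk
    have hmapc : ContinuousOn (fun y : ℝ × ℝ => ((ε * ((k:ℝ) + y.1), ε * y.2) : ℝ × ℝ))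
        (Icc (0:ℝ) 1 ×ˢ Icc (-1:ℝ) 0) := by fun_prop
    have hcomp : ContinuousOn (fun y : ℝ × ℝ => (u (ε * ((k:ℝ) + y.1), ε * y.2)) ^ 2)
        (Icc (0:ℝ) 1 ×ˢ Icc (-1:ℝ) 0) :=
      ((hucont.comp hmapc (fun y hy => hmapsU k hk y hy)).pow 2)
    exact (hcomp.integrableOn_compact hYcomp).mono_set hYsub
  -- per-cell estimate
  have hper : ∀ k ∈ K, ∫ y in Ybelow, (u (ε * ((k:ℝ) + y.1), ε * y.2)) ^ 2
      ≤ (1/b + 1) * (ε⁻¹ * ∫ t in Ioo (ε * (k:ℝ)) (ε * (k:ℝ) + ε), G t) := by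
    intro k hk
    obtain ⟨hk0, hka⟩ := Kset_subset_facts hk
    have htrace : ∀ y ∈ Ybelow, (u (ε * ((k:ℝ) + y.1), ε * y.2)) ^ 2
        ≤ (1/b + 1) * G (ε * ((k:ℝ) + y.1)) := by
      intro y hy
      obtain ⟨hy1, hy2⟩ := hy
      have hcb := cell_coord_bounds hε hk0 hka hy1.1.le hy1.2.le
      have hseg : ∀ s ∈ Icc (-b) (0:ℝ), ((ε * ((k:ℝ) + y.1), s) : ℝ × ℝ) ∈ U := by
        intro s hs
        exact hQU ⟨hcb, hs⟩
      have hx₂ : ε * y.2 ∈ Icc (-b) (0:ℝ) :=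
        cell_coord2_bounds hε hεb hy2.1.le hy2.2.le
      have := trace_bound_aux hUo huC1 hb hseg hx₂
      exact this
    -- integrability of dominating function
    have hΨcont : ContinuousOn (fun y : ℝ × ℝ => F (ε * ((k:ℝ) + y.1), y.2))
        (Icc (0:ℝ) 1 ×ˢ Icc (-b) (0:ℝ)) := by
      apply hFcont.comp (by fun_prop)
      rintro ⟨y1, y2⟩ ⟨hy1, hy2⟩
      exact hQU ⟨cell_coord_bounds hε hk0 hka hy1.1 hy1.2, hy2⟩
    have hΨint : IntegrableOn (fun y : ℝ × ℝ => F (ε * ((k:ℝ) + y.1), y.2))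
        (Ioo (0:ℝ) 1 ×ˢ Ioo (-b) (0:ℝ)) :=
      (hΨcont.integrableOn_compact (isCompact_Icc.prod isCompact_Icc)).mono_set
        (prod_mono Ioo_subset_Icc_self Ioo_subset_Icc_self)
    have hΨprod : Integrable (fun y : ℝ × ℝ => F (ε * ((k:ℝ) + y.1), y.2))
        (((volume : Measure ℝ).restrict (Ioo 0 1)).prod
          ((volume : Measure ℝ).restrict (Ioo (-b) (0:ℝ)))) := by
      rw [Measure.prod_restrict]
      exact hΨint
    have hΦint : IntegrableOn (fun t : ℝ => G (ε * ((k:ℝ) + t))) (Ioo (0:ℝ) 1) := by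
      have h := hΨprod.integral_prod_left
      simpa only [IntegrableOn, hGdef] using h
    have hone : IntegrableOn (fun _ : ℝ => (1:ℝ)) (Ioo (-1:ℝ) 0) :=
      integrableOn_const measure_Ioo_lt_top.ne
    have hdomint : IntegrableOn (fun y : ℝ × ℝ => G (ε * ((k:ℝ) + y.1))) Ybelow := by
      have h := hΦint.mul_prod hone
      rw [Measure.prod_restrict] at h
      simpa [IntegrableOn, Ybelow, Measure.volume_eq_prod] using h
    have hmono : ∫ y in Ybelow, (u (ε * ((k:ℝ) + y.1), ε * y.2)) ^ 2
        ≤ ∫ y in Ybelow, (1/b + 1) * G (ε * ((k:ℝ) + y.1)) := by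
      apply integral_mono_of_nonneg
      · exact Filter.Eventually.of_forall fun y => sq_nonneg _
      · exact hdomint.const_mul _
      · rw [Filter.EventuallyLE, ae_restrict_iff' hYmeas]
        exact Filter.Eventually.of_forall htrace
    refine hmono.trans (le_of_eq ?_)
    rw [MeasureTheory.integral_const_mul]
    congr 1
    have hprodmul := MeasureTheory.setIntegral_prod_mul (μ := (volume : Measure ℝ))
      (ν := (volume : Measure ℝ)) (fun t => G (ε * ((k:ℝ) + t))) (fun _ => (1:ℝ))
      (Ioo (0:ℝ) 1) (Ioo (-1:ℝ) 0)
    have hone1 : ∫ _ in Ioo (-1:ℝ) 0, (1:ℝ) = 1 := by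
      rw [setIntegral_const, smul_eq_mul, Real.volume_real_Ioo]
      norm_num
    have hYeq : ∫ y in Ybelow, G (ε * ((k:ℝ) + y.1))
        = ∫ t in Ioo (0:ℝ) 1, G (ε * ((k:ℝ) + t)) := by
      have := hprodmul
      rw [hone1, mul_one] at this
      simpa [Ybelow, Measure.volume_eq_prod] using this
    rw [hYeq]
    have h2 : ∫ t in Ioo (0:ℝ) 1, G (ε * ((k:ℝ) + t)) = ∫ t in (0:ℝ)..1, G (ε * t + ε * (k:ℝ)) := by
      rw [intervalIntegral.integral_of_le (by norm_num : (0:ℝ) ≤ 1),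
        integral_Ioc_eq_integral_Ioo]
      congr 1
      funext t
      ring_nf
    rw [h2, intervalIntegral.integral_comp_mul_add G (ne_of_gt hε) (ε * (k:ℝ)),
      show ε * 0 + ε * (k:ℝ) = ε * (k:ℝ) by ring, show ε * 1 + ε * (k:ℝ) = ε * (k:ℝ) + ε by ring,
      smul_eq_mul]
    congr 1
    rw [intervalIntegral.integral_of_le (by nlinarith : ε * (k:ℝ) ≤ ε * (k:ℝ) + ε),
      integral_Ioc_eq_integral_Ioo]
  -- cardinality bound
  set κ : ℝ := (K.card : ℝ) with hκdef
  have hκlb : (d - c) / (2 * ε) ≤ κ := Kset_card_lb hε hc hcd hd hε2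
  have hκpos : 0 < κ := lt_of_lt_of_le (div_pos (by linarith) (by linarith)) hκlb
  -- Cauchy-Schwarz
  have hCS : ∀ y : ℝ × ℝ, (Uav a c d ε u y) ^ 2
      ≤ κ⁻¹ * ∑ k ∈ K, (u (ε * ((k:ℝ) + y.1), ε * y.2)) ^ 2 := by
    intro y
    have hcs := sq_sum_le_card_mul_sum_sq (s := K)
      (f := fun k : ℕ => u (ε * ((k:ℝ) + y.1), ε * y.2))
    have h1 : (Uav a c d ε u y) ^ 2
        = (κ⁻¹) ^ 2 * (∑ k ∈ K, u (ε * ((k:ℝ) + y.1), ε * y.2)) ^ 2 := by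
      rw [Uav, one_div]
      ring
    rw [h1]
    calc (κ⁻¹) ^ 2 * (∑ k ∈ K, u (ε * ((k:ℝ) + y.1), ε * y.2)) ^ 2
        ≤ (κ⁻¹) ^ 2 * (κ * ∑ k ∈ K, (u (ε * ((k:ℝ) + y.1), ε * y.2)) ^ 2) := by
          apply mul_le_mul_of_nonneg_left _ (by positivity)
          exact_mod_cast hcs
      _ = κ⁻¹ * ∑ k ∈ K, (u (ε * ((k:ℝ) + y.1), ε * y.2)) ^ 2 := by
          field_simp
  have hsumint : IntegrableOn
      (fun y : ℝ × ℝ => κ⁻¹ * ∑ k ∈ K, (u (ε * ((k:ℝ) + y.1), ε * y.2)) ^ 2) Ybelow :=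
    (integrable_finset_sum K (fun k hk => huint k hk)).const_mul _
  have hstep2 : ∫ y in Ybelow, (Uav a c d ε u y) ^ 2
      ≤ κ⁻¹ * ∑ k ∈ K, ∫ y in Ybelow, (u (ε * ((k:ℝ) + y.1), ε * y.2)) ^ 2 := by
    have h := integral_mono_of_nonneg (Filter.Eventually.of_forall fun y => sq_nonneg _)
      hsumint (Filter.Eventually.of_forall hCS)
    rwa [MeasureTheory.integral_const_mul,
      integral_finset_sum K (fun k hk => huint k hk)] at h
  have hGoal1 : ∫ t in Ioo 0 a, G t ≤ M := by rw [hGeq]; exact hFM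
  have hsum3 : ∑ k ∈ K, ∫ y in Ybelow, (u (ε * ((k:ℝ) + y.1), ε * y.2)) ^ 2
      ≤ (1/b + 1) * ε⁻¹ * M := by
    calc ∑ k ∈ K, ∫ y in Ybelow, (u (ε * ((k:ℝ) + y.1), ε * y.2)) ^ 2
        ≤ ∑ k ∈ K, (1/b + 1) * (ε⁻¹ * ∫ t in Ioo (ε * (k:ℝ)) (ε * (k:ℝ) + ε), G t) :=
          Finset.sum_le_sum hper
      _ = (1/b + 1) * ε⁻¹ * ∑ k ∈ K, ∫ t in Ioo (ε * (k:ℝ)) (ε * (k:ℝ) + ε), G t := by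
          rw [Finset.mul_sum]
          exact Finset.sum_congr rfl fun k _ => by ring
      _ ≤ (1/b + 1) * ε⁻¹ * M := by
          apply mul_le_mul_of_nonneg_left (hsum_le.trans hGoal1) (by positivity)
  have hκε : κ⁻¹ * ε⁻¹ ≤ 2 / (d - c) := by
    have hmul : (d - c) / (2 * ε) * ε ≤ κ * ε := mul_le_mul_of_nonneg_right hκlb hε.le
    have hid : (d - c) / (2 * ε) * ε = (d - c) / 2 := by field_simp
    have h2 : (d - c) / 2 ≤ ε * κ := by rw [← hid]; linarith [hmul]
    have hpos2 : (0:ℝ) < (d - c) / 2 := by linarith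
    have h3 : (ε * κ)⁻¹ ≤ ((d - c) / 2)⁻¹ := by
      apply inv_anti₀ hpos2 h2
    calc κ⁻¹ * ε⁻¹ = (ε * κ)⁻¹ := by rw [mul_inv]; ring
      _ ≤ ((d - c) / 2)⁻¹ := h3
      _ = 2 / (d - c) := by rw [inv_div]
  calc ∫ y in Ybelow, (Uav a c d ε u y) ^ 2
      ≤ κ⁻¹ * ((1/b + 1) * ε⁻¹ * M) :=
        hstep2.trans (mul_le_mul_of_nonneg_left hsum3 (inv_nonneg.mpr hκpos.le))
    _ = (1/b + 1) * (κ⁻¹ * ε⁻¹) * M := by ring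
    _ ≤ (1/b + 1) * (2 / (d - c)) * M := by
        apply mul_le_mul_of_nonneg_right _ hM0
        apply mul_le_mul_of_nonneg_left hκε (by positivity)

end AuxiliaryLemmas

/-- **L² bound for the cell averages below the channels.** -/
theorem cell_average_L2_bound_below
    (a b L V α : ℝ) (ha : 0 < a) (hb : 0 < b) (hL : 0 < L) (hV : 0 < V) (hα : 0 < α)
    (c d : ℝ) (hc : 0 ≤ c) (hcd : c < d) (hd : d ≤ a)
    (ε : ℕ → ℝ) (hadm : ∀ n, Admissible a (ε n)) (hεlim : Tendsto ε atTop (𝓝 0))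
    (uu : ℕ → ℝ × ℝ → ℝ)
    (hreg : ∀ n, C1Nhd (uu n) (OmegaEps a b L V α (ε n)))
    (M : ℝ)
    (hbdd : ∀ n, ∫ x in OmegaEps a b L V α (ε n),
      ((uu n x) ^ 2 + dot (grad (uu n) x) (grad (uu n) x)) ≤ M) :
    ∃ C : ℝ, ∀ n, ∫ y in Ybelow, (Uav a c d (ε n) (uu n) y) ^ 2 ≤ C := by
  have hδ : (0:ℝ) < min b ((d - c) / 4) := lt_min hb (by linarith)
  obtain ⟨N, hN⟩ := Filter.eventually_atTop.mp (hεlim.eventually (gt_mem_nhds hδ))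
  have hM0 : 0 ≤ M := by
    refine le_trans (integral_nonneg fun x => ?_) (hbdd 0)
    have : dot (grad (uu 0) x) (grad (uu 0) x)
        = (pd1 (uu 0) x) ^ 2 + (pd2 (uu 0) x) ^ 2 := by
      simp only [dot, grad]; ring
    rw [this]
    positivity
  refine ⟨(1/b + 1) * (2 / (d - c)) * M
    + ∑ i ∈ Finset.range N, |∫ y in Ybelow, (Uav a c d (ε i) (uu i) y) ^ 2|, fun n => ?_⟩
  have hsum_nonneg : 0 ≤ ∑ i ∈ Finset.range N,
      |∫ y in Ybelow, (Uav a c d (ε i) (uu i) y) ^ 2| :=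
    Finset.sum_nonneg fun i _ => abs_nonneg _
  have hC₀0 : 0 ≤ (1/b + 1) * (2 / (d - c)) * M := by
    have h1 : (0:ℝ) ≤ 1/b + 1 := by positivity
    have h2 : (0:ℝ) ≤ 2 / (d - c) := by
      apply div_nonneg (by norm_num); linarith
    positivity
  rcases le_or_gt N n with hn | hn
  · have hεn := hN n hn
    have hε1 : ε n ≤ b := (lt_min_iff.mp hεn).1.le
    have hε2 : 4 * ε n ≤ d - c := by
      have := (lt_min_iff.mp hεn).2
      linarith
    have := small_eps_bound a b L V α ha hb hL hV hα c d hc hcd hd (ε n) (hadm n).1 hε1 hε2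
      (uu n) (hreg n) M (hbdd n)
    linarith
  · have hterm : ∫ y in Ybelow, (Uav a c d (ε n) (uu n) y) ^ 2
        ≤ ∑ i ∈ Finset.range N, |∫ y in Ybelow, (Uav a c d (ε i) (uu i) y) ^ 2| := by
      refine le_trans (le_abs_self _) ?_
      exact Finset.single_le_sum (f := fun i => |∫ y in Ybelow, (Uav a c d (ε i) (uu i) y) ^ 2|)
        (fun i _ => abs_nonneg _) (Finset.mem_range.mpr hn)
    linarith
end
end

section
/- Identification of the boundary trace by thin-strip averages. Let 0 ≤ c < d ≤ a. Suppose the functions u^{ε_n} are C¹ on a neighborhood of the closure of Ω₀ = (0,a)×(−b,0), satisfy the uniform bound ∫_{Ω₀} (|u^{ε_n}|² + |∇u^{ε_n}|²) ≤ M for all n, and converge weakly in H¹(Ω₀) to a function u that is C¹ on a neighborhood of the closure of Ω₀ (that is, ∫_{Ω₀} u^{ε_n} φ → ∫_{Ω₀} u φ and ∫_{Ω₀} ∇u^{ε_n}·Φ → ∫_{Ω₀} ∇u·Φ for all continuous φ : ℝ² → ℝ and Φ : ℝ² → ℝ²). Then the averages of u^{ε_n} over the thin strip of height ε_n below the upper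 boundary converge to the boundary trace of u: (1/ε_n) ∫_c^d ∫_{−ε_n}^0 u^{ε_n}(x₁,x₂) dx₂ dx₁ → ∫_c^d u(x₁, 0) dx₁ as n → ∞. -/
open MeasureTheory Set Filter Topology

noncomputable section

namespace TSaux

/-- weight -/
def Wb (b t : ℝ) : ℝ := ((t + b) / b) ^ 2
def wb (b t : ℝ) : ℝ := 2 * (t + b) / b ^ 2

lemma Wb_cont (b : ℝ) : Continuous (Wb b) := by unfold Wb; continuity
lemma wb_cont (b : ℝ) : Continuous (wb b) := by unfold wb; continuity

lemma Wb_deriv {b : ℝ} (hb : 0 < b) (t : ℝ) : HasDerivAt (Wb b) (wb b t) t := by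
  have h : HasDerivAt (fun t => (t + b) / b) (1 / b) t :=
    ((hasDerivAt_id t).add_const b).div_const b
  have h2 : HasDerivAt (fun t => ((t + b) / b) ^ 2) ((2:ℕ) * ((t + b) / b) ^ (2 - 1) * (1 / b)) t := h.pow 2
  convert h2 using 1
  rfl
  unfold wb
  rw [pow_one]
  field_simp
  ring

lemma Wb_zero {b : ℝ} (hb : 0 < b) : Wb b 0 = 1 := by
  unfold Wb; field_simp; ring

lemma Wb_negb (b : ℝ) : Wb b (-b) = 0 := by unfold Wb; simp

lemma Wb_mem {b t : ℝ} (hb : 0 < b) (ht : t ∈ Icc (-b) 0) : Wb b t ∈ Icc (0:ℝ) 1 := by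
  obtain ⟨h1, h2⟩ := ht
  unfold Wb
  constructor
  · positivity
  · have h3 : 0 ≤ t + b := by linarith
    have h4 : (t + b) / b ≤ 1 := by rw [div_le_one hb]; linarith
    nlinarith [div_nonneg h3 hb.le]

lemma wb_abs_le {b t : ℝ} (hb : 0 < b) (ht : t ∈ Icc (-b) 0) : |wb b t| ≤ 2 / b := by
  obtain ⟨h1, h2⟩ := ht
  unfold wb
  rw [abs_le]
  have hb2 : (0:ℝ) < b ^ 2 := by positivity
  have h0 : 0 ≤ 2 * (t + b) / b ^ 2 := div_nonneg (by linarith) hb2.le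
  constructor
  · have : 0 < 2 / b := by positivity
    linarith
  · rw [div_le_div_iff₀ hb2 hb]
    nlinarith

/-- generic 1D FTC for `ψ f + Ψ f'`. -/
lemma ftc1d {f f' : ℝ → ℝ} {b : ℝ} (hb : 0 < b)
    (hfc : ContinuousOn f (Icc (-b) 0)) (hfc' : ContinuousOn f' (Icc (-b) 0))
    (hfd : ∀ t ∈ Icc (-b) (0:ℝ), HasDerivAt f (f' t) t)
    {Ψ ψ : ℝ → ℝ} (hΨ : ∀ t, HasDerivAt Ψ (ψ t) t) (hψc : Continuous ψ) (hΨc : Continuous Ψ)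
    {s r : ℝ} (hs : s ∈ Icc (-b) (0:ℝ)) (hr : r ∈ Icc (-b) (0:ℝ)) :
    ∫ t in s..r, (ψ t * f t + Ψ t * f' t) = Ψ r * f r - Ψ s * f s := by
  have hsub : uIcc s r ⊆ Icc (-b) 0 := uIcc_subset_Icc hs hr
  apply intervalIntegral.integral_eq_sub_of_hasDerivAt
  · intro t ht
    exact (hΨ t).mul (hfd t (hsub ht))
  · apply ContinuousOn.intervalIntegrable
    apply ContinuousOn.add
    · exact (hψc.continuousOn.mul (hfc.mono hsub))
    · exact (hΨc.continuousOn.mul (hfc'.mono hsub))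
section
variable {f f' : ℝ → ℝ} {b ε : ℝ}

lemma trace_avg (hb : 0 < b)
    (hfc : ContinuousOn f (Icc (-b) 0)) (hfc' : ContinuousOn f' (Icc (-b) 0))
    (hfd : ∀ t ∈ Icc (-b) (0:ℝ), HasDerivAt f (f' t) t) :
    ∫ t in (-b)..0, (wb b t * f t + Wb b t * f' t) = f 0 := by
  have h := ftc1d hb hfc hfc' hfd (Wb_deriv hb) (wb_cont b) (Wb_cont b)
    (s := -b) (r := 0) (by constructor <;> linarith) (by constructor <;> linarith)
  rw [h, Wb_zero hb, Wb_negb]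
  ring

lemma strip_avg (hb : 0 < b) (hε : 0 < ε) (hεb : ε ≤ b)
    (hfc : ContinuousOn f (Icc (-b) 0)) (hfc' : ContinuousOn f' (Icc (-b) 0))
    (hfd : ∀ t ∈ Icc (-b) (0:ℝ), HasDerivAt f (f' t) t) :
    ∫ t in (-b)..0, (wb b t * f t + (Wb b t - max 0 ((t + ε) / ε)) * f' t)
      = (1 / ε) * ∫ t in (-ε)..0, f t := by
  have hmε : -ε ∈ Icc (-b) (0:ℝ) := ⟨by linarith, by linarith⟩
  have hmb : -b ∈ Icc (-b) (0:ℝ) := ⟨le_refl _, by linarith⟩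
  have h0 : (0:ℝ) ∈ Icc (-b) (0:ℝ) := ⟨by linarith, le_refl _⟩
  have hΦc : Continuous (fun t => Wb b t - max 0 ((t + ε) / ε)) := by
    apply (Wb_cont b).sub
    exact continuous_const.max (by continuity)
  -- integrands are interval integrable on any subinterval of [-b,0]
  have hIxy : ∀ s r : ℝ, s ∈ Icc (-b) (0:ℝ) → r ∈ Icc (-b) (0:ℝ) →
      IntervalIntegrable (fun t => wb b t * f t + (Wb b t - max 0 ((t + ε) / ε)) * f' t)
        volume s r := by
    intro s r hs hr
    apply ContinuousOn.intervalIntegrable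
    have hsub := uIcc_subset_Icc hs hr
    exact ((wb_cont b).continuousOn.mul (hfc.mono hsub)).add
      (hΦc.continuousOn.mul (hfc'.mono hsub))
  -- split
  rw [← intervalIntegral.integral_add_adjacent_intervals (b := -ε) (hIxy _ _ hmb hmε)
    (hIxy _ _ hmε h0)]
  -- left piece
  have hL : ∫ t in (-b)..(-ε), (wb b t * f t + (Wb b t - max 0 ((t + ε) / ε)) * f' t)
      = Wb b (-ε) * f (-ε) - Wb b (-b) * f (-b) := by
    rw [intervalIntegral.integral_congr (g := fun t => wb b t * f t + Wb b t * f' t)]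
    · exact ftc1d hb hfc hfc' hfd (Wb_deriv hb) (wb_cont b) (Wb_cont b) hmb hmε
    · intro t ht
      rw [uIcc_of_le (by linarith)] at ht
      have : (t + ε) / ε ≤ 0 := div_nonpos_of_nonpos_of_nonneg (by linarith [ht.2]) hε.le
      simp only [max_eq_left this]
      ring_nf
  -- right piece
  have hR : ∫ t in (-ε)..0, (wb b t * f t + (Wb b t - max 0 ((t + ε) / ε)) * f' t)
      = - (Wb b (-ε) * f (-ε)) + (1 / ε) * ∫ t in (-ε)..0, f t := by
    have hcongr : EqOn (fun t => wb b t * f t + (Wb b t - max 0 ((t + ε) / ε)) * f' t)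
        (fun t => ((wb b t - 1/ε) * f t + (Wb b t - (t + ε) / ε) * f' t) + (1/ε) * f t)
        (uIcc (-ε) 0) := by
      intro t ht
      rw [uIcc_of_le (by linarith)] at ht
      have : (0:ℝ) ≤ (t + ε) / ε := div_nonneg (by linarith [ht.1]) hε.le
      simp only [max_eq_right this]
      ring
    rw [intervalIntegral.integral_congr hcongr]
    have hI1 : IntervalIntegrable
        (fun t => (wb b t - 1/ε) * f t + (Wb b t - (t + ε) / ε) * f' t) volume (-ε) 0 := by
      apply ContinuousOn.intervalIntegrable
      have hsub := uIcc_subset_Icc hmε h0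
      exact (((wb_cont b).sub continuous_const).continuousOn.mul (hfc.mono hsub)).add
        (((Wb_cont b).sub (by continuity)).continuousOn.mul (hfc'.mono hsub))
    have hI2 : IntervalIntegrable (fun t => (1/ε) * f t) volume (-ε) 0 := by
      apply ContinuousOn.intervalIntegrable
      exact continuous_const.continuousOn.mul (hfc.mono (uIcc_subset_Icc hmε h0))
    rw [intervalIntegral.integral_add hI1 hI2, intervalIntegral.integral_const_mul]
    congr 1
    have hΨd : ∀ t, HasDerivAt (fun t => Wb b t - (t + ε) / ε) (wb b t - 1/ε) t := by
      intro t
      exact (Wb_deriv hb t).sub (((hasDerivAt_id t).add_const ε).div_const ε)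
    have h := ftc1d hb hfc hfc' hfd hΨd ((wb_cont b).sub continuous_const)
      ((Wb_cont b).sub (by continuity)) hmε h0
    rw [h, Wb_zero hb]
    have h1 : ((0:ℝ) + ε) / ε = 1 := by field_simp; ring
    have h2 : ((-ε:ℝ) + ε) / ε = 0 := by simp
    rw [h1, h2]
    ring
  rw [hL, hR, Wb_negb]
  ring

end
end TSaux
section
variable {v : ℝ × ℝ → ℝ} {U : Set (ℝ × ℝ)} {a b x₁ : ℝ}

lemma cont_cl (hUo : IsOpen U) (hv : ContDiffOn ℝ 1 v U)
    (hsub : Icc 0 a ×ˢ Icc (-b) 0 ⊆ U) :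
    ContinuousOn v (Icc 0 a ×ˢ Icc (-b) 0) := hv.continuousOn.mono hsub

lemma cont_pd2_cl (hUo : IsOpen U) (hv : ContDiffOn ℝ 1 v U)
    (hsub : Icc 0 a ×ˢ Icc (-b) 0 ⊆ U) :
    ContinuousOn (pd2 v) (Icc 0 a ×ˢ Icc (-b) 0) := by
  have hC : ContinuousOn (fderiv ℝ v) U := hv.continuousOn_fderiv_of_isOpen hUo le_rfl
  exact (hC.clm_apply continuousOn_const).mono hsub

lemma slice_props (hUo : IsOpen U) (hv : ContDiffOn ℝ 1 v U)
    (hsub : Icc 0 a ×ˢ Icc (-b) 0 ⊆ U) (hx₁ : x₁ ∈ Icc (0:ℝ) a) :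
    ContinuousOn (fun t => v (x₁, t)) (Icc (-b) 0) ∧
    ContinuousOn (fun t => pd2 v (x₁, t)) (Icc (-b) 0) ∧
    ∀ t ∈ Icc (-b) (0:ℝ), HasDerivAt (fun s => v (x₁, s)) (pd2 v (x₁, t)) t := by
  have hcurve : Continuous (fun t : ℝ => (x₁, t)) := continuous_const.prodMk continuous_id
  have hmaps : MapsTo (fun t : ℝ => (x₁, t)) (Icc (-b) 0) U := fun t ht => hsub ⟨hx₁, ht⟩
  refine ⟨(cont_cl hUo hv hsub).comp hcurve.continuousOn (fun t ht => ⟨hx₁, ht⟩),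
    (cont_pd2_cl hUo hv hsub).comp hcurve.continuousOn (fun t ht => ⟨hx₁, ht⟩), ?_⟩
  intro t ht
  have hx : (x₁, t) ∈ U := hsub ⟨hx₁, ht⟩
  have hd : DifferentiableAt ℝ v (x₁, t) :=
    (hv.differentiableOn one_ne_zero).differentiableAt (hUo.mem_nhds hx)
  have hcd : HasDerivAt (fun s : ℝ => (x₁, s)) ((0:ℝ), (1:ℝ)) t :=
    HasDerivAt.prodMk (hasDerivAt_const t x₁) (hasDerivAt_id t)
  exact hd.hasFDerivAt.comp_hasDerivAt t hcd

end

lemma iterated_eq_set {c d b : ℝ} (hcd : c ≤ d) (hb : 0 < b) (g : ℝ × ℝ → ℝ)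
    (hg : IntegrableOn g (Ioo c d ×ˢ Ioo (-b) 0)) :
    ∫ x₁ in c..d, ∫ t in (-b)..0, g (x₁, t) = ∫ x in Ioo c d ×ˢ Ioo (-b) (0:ℝ), g x := by
  have hb0 : (-b : ℝ) ≤ 0 := by linarith
  rw [intervalIntegral.integral_of_le hcd, integral_Ioc_eq_integral_Ioo]
  have h2 : ∫ x in Ioo c d ×ˢ Ioo (-b) (0:ℝ), g x
      = ∫ x₁ in Ioo c d, ∫ t in Ioo (-b) (0:ℝ), g (x₁, t) :=
    MeasureTheory.setIntegral_prod g hg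
  rw [h2]
  apply setIntegral_congr_fun measurableSet_Ioo
  intro x₁ _
  show (∫ t in (-b)..0, g (x₁, t)) = _
  rw [intervalIntegral.integral_of_le hb0, integral_Ioc_eq_integral_Ioo]
/-- continuous cutoff -/
def chi (c d δ x : ℝ) : ℝ := max 0 (min 1 (min ((x - c) / δ) ((d - x) / δ)))

lemma chi_cont (c d δ : ℝ) : Continuous (chi c d δ) := by
  apply continuous_const.max
  apply continuous_const.min
  exact ((continuous_id.sub continuous_const).div_const δ).min
    ((continuous_const.sub continuous_id).div_const δ)

lemma chi_nonneg (c d δ x : ℝ) : 0 ≤ chi c d δ x := le_max_left _ _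

lemma chi_le_one (c d δ x : ℝ) : chi c d δ x ≤ 1 :=
  max_le zero_le_one (min_le_left _ _)

lemma chi_eq_zero {c d δ x : ℝ} (hδ : 0 < δ) (h : x ≤ c ∨ d ≤ x) : chi c d δ x = 0 := by
  apply max_eq_left
  rcases h with h | h
  · exact le_trans (le_trans (min_le_right _ _) (min_le_left _ _))
      (div_nonpos_of_nonpos_of_nonneg (by linarith) hδ.le)
  · exact le_trans (le_trans (min_le_right _ _) (min_le_right _ _))
      (div_nonpos_of_nonpos_of_nonneg (by linarith) hδ.le)

lemma chi_eq_one {c d δ x : ℝ} (hδ : 0 < δ) (h1 : c + δ ≤ x) (h2 : x ≤ d - δ) :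
    chi c d δ x = 1 := by
  have ha : (1:ℝ) ≤ (x - c) / δ := by rw [le_div_iff₀ hδ]; linarith
  have hb : (1:ℝ) ≤ (d - x) / δ := by rw [le_div_iff₀ hδ]; linarith
  unfold chi
  rw [min_eq_left (le_min ha hb), max_eq_right zero_le_one]

lemma intOn {a b : ℝ} {f : ℝ × ℝ → ℝ}
    (hf : ContinuousOn f (Icc 0 a ×ˢ Icc (-b) 0))
    {s : Set (ℝ × ℝ)} (hs : s ⊆ Icc 0 a ×ˢ Icc (-b) 0) : IntegrableOn f s :=
  (hf.integrableOn_compact (isCompact_Icc.prod isCompact_Icc)).mono_set hs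

lemma clsub {a b : ℝ} : Ioo 0 a ×ˢ Ioo (-b) (0:ℝ) ⊆ Icc 0 a ×ˢ Icc (-b) 0 :=
  prod_mono Ioo_subset_Icc_self Ioo_subset_Icc_self

/-- generic small-set L¹ bound from an L² bound -/
lemma bound_piece {a b : ℝ} {f : ℝ × ℝ → ℝ}
    (hf : ContinuousOn f (Icc 0 a ×ˢ Icc (-b) 0))
    {s : Set (ℝ × ℝ)} (hs : MeasurableSet s) (hsub : s ⊆ Ioo 0 a ×ˢ Ioo (-b) 0)
    {K V θ : ℝ} (hθ : 0 < θ)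
    (hK : ∫ x in Ioo 0 a ×ˢ Ioo (-b) (0:ℝ), f x ^ 2 ≤ K)
    (hV : (volume s).toReal ≤ V) :
    ∫ x in s, |f x| ≤ θ / 2 * K + 1 / (2 * θ) * V := by
  have hscl : s ⊆ Icc 0 a ×ˢ Icc (-b) 0 := hsub.trans clsub
  have hfin : volume s ≠ ⊤ := by
    apply ne_top_of_le_ne_top _ (measure_mono hscl)
    rw [Measure.volume_eq_prod, Measure.prod_prod]
    exact (ENNReal.mul_ne_top (by simp [Real.volume_Icc]) (by simp [Real.volume_Icc]))
  have hint_abs : IntegrableOn (fun x => |f x|) s := intOn hf.abs hscl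
  have hint_sq_s : IntegrableOn (fun x => f x ^ 2) s := intOn (hf.pow 2) hscl
  have hint_sq_Ω : IntegrableOn (fun x => f x ^ 2) (Ioo 0 a ×ˢ Ioo (-b) (0:ℝ)) :=
    intOn (hf.pow 2) clsub
  have hint_rhs : IntegrableOn (fun x => θ / 2 * f x ^ 2 + 1 / (2 * θ)) s := by
    apply hint_sq_s.const_mul (θ / 2) |>.add
    exact integrableOn_const hfin
  calc ∫ x in s, |f x| ≤ ∫ x in s, (θ / 2 * f x ^ 2 + 1 / (2 * θ)) := by
        apply setIntegral_mono_on hint_abs hint_rhs hs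
        intro x _
        have h1 : 2 * θ * |f x| ≤ θ ^ 2 * (f x) ^ 2 + 1 := by
          nlinarith [sq_nonneg (θ * |f x| - 1), sq_abs (f x)]
        calc |f x| = (2 * θ * |f x|) / (2 * θ) := by field_simp
          _ ≤ (θ ^ 2 * (f x) ^ 2 + 1) / (2 * θ) := by gcongr
          _ = θ / 2 * f x ^ 2 + 1 / (2 * θ) := by field_simp
    _ = (θ / 2 * ∫ x in s, f x ^ 2) + (volume s).toReal * (1 / (2 * θ)) := by
        rw [integral_add (hint_sq_s.const_mul _) (integrableOn_const hfin),
          integral_const_mul, setIntegral_const, smul_eq_mul, measureReal_def]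
    _ ≤ θ / 2 * K + 1 / (2 * θ) * V := by
        have h1 : ∫ x in s, f x ^ 2 ≤ K := by
          refine le_trans ?_ hK
          apply setIntegral_mono_set hint_sq_Ω
          · exact Filter.Eventually.of_forall (fun x => sq_nonneg _)
          · exact hsub.eventuallyLE
        have h2 : (volume s).toReal * (1 / (2 * θ)) ≤ V * (1 / (2 * θ)) := by
          apply mul_le_mul_of_nonneg_right hV (by positivity)
        have h3 := mul_le_mul_of_nonneg_left h1 (by positivity : (0:ℝ) ≤ θ / 2)
        linarith [h2, h3]
set_option maxHeartbeats 2000000 in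
lemma weak_term {a b c d : ℝ} (hb : 0 < b) (hc : 0 ≤ c) (hcd : c < d) (hd : d ≤ a)
    (g : ℕ → ℝ × ℝ → ℝ) (G : ℝ × ℝ → ℝ)
    (hgc : ∀ n, ContinuousOn (g n) (Icc 0 a ×ˢ Icc (-b) 0))
    (hGc : ContinuousOn G (Icc 0 a ×ˢ Icc (-b) 0))
    (K : ℝ)
    (hgK : ∀ n, ∫ x in Ioo 0 a ×ˢ Ioo (-b) (0:ℝ), (g n x) ^ 2 ≤ K)
    (hGK : ∫ x in Ioo 0 a ×ˢ Ioo (-b) (0:ℝ), (G x) ^ 2 ≤ K)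
    (hw : ∀ φ : ℝ × ℝ → ℝ, Continuous φ →
      Tendsto (fun n => ∫ x in Ioo 0 a ×ˢ Ioo (-b) (0:ℝ), g n x * φ x) atTop
        (𝓝 (∫ x in Ioo 0 a ×ˢ Ioo (-b) (0:ℝ), G x * φ x)))
    (ψ : ℝ → ℝ) (hψ : Continuous ψ) (Cψ : ℝ)
    (hCψ : ∀ t ∈ Icc (-b) (0:ℝ), |ψ t| ≤ Cψ) :
    Tendsto (fun n => ∫ x in Ioo c d ×ˢ Ioo (-b) (0:ℝ), ψ x.2 * (g n x - G x))
      atTop (𝓝 0) := by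
  have hΩm : MeasurableSet (Ioo (0:ℝ) a ×ˢ Ioo (-b) (0:ℝ)) :=
    measurableSet_Ioo.prod measurableSet_Ioo
  have hSm : MeasurableSet (Ioo c d ×ˢ Ioo (-b) (0:ℝ)) :=
    measurableSet_Ioo.prod measurableSet_Ioo
  have hSsubΩ : Ioo c d ×ˢ Ioo (-b) (0:ℝ) ⊆ Ioo 0 a ×ˢ Ioo (-b) (0:ℝ) :=
    prod_mono (Ioo_subset_Ioo hc hd) le_rfl
  have hScl : Ioo c d ×ˢ Ioo (-b) (0:ℝ) ⊆ Icc 0 a ×ˢ Icc (-b) 0 := hSsubΩ.trans clsub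
  have hCψ0 : 0 ≤ Cψ := le_trans (abs_nonneg _) (hCψ 0 ⟨by linarith, le_rfl⟩)
  have hK0 : 0 ≤ K :=
    le_trans (setIntegral_nonneg hΩm (fun x _ => sq_nonneg (g 0 x))) (hgK 0)
  -- difference of squares bound
  have hdsq : ∀ n, ∫ x in Ioo 0 a ×ˢ Ioo (-b) (0:ℝ), (g n x - G x) ^ 2 ≤ 4 * K := by
    intro n
    have h1 : ∫ x in Ioo 0 a ×ˢ Ioo (-b) (0:ℝ), (g n x - G x) ^ 2
        ≤ ∫ x in Ioo 0 a ×ˢ Ioo (-b) (0:ℝ), (2 * (g n x) ^ 2 + 2 * (G x) ^ 2) := by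
      apply setIntegral_mono_on (intOn (((hgc n).sub hGc).pow 2) clsub)
        ((intOn ((hgc n).pow 2) clsub).const_mul 2 |>.add
          ((intOn (hGc.pow 2) clsub).const_mul 2)) hΩm
      intro x _
      simp only [Pi.add_apply, Pi.pow_apply, Pi.sub_apply]
      nlinarith [sq_nonneg (g n x + G x)]
    rw [integral_add (f := fun x => 2 * g n x ^ 2) (g := fun x => 2 * G x ^ 2)
      ((intOn ((hgc n).pow 2) clsub).const_mul 2)
      ((intOn (hGc.pow 2) clsub).const_mul 2), integral_const_mul, integral_const_mul] at h1
    linarith [hgK n, hGK]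
  rw [NormedAddCommGroup.tendsto_nhds_zero]
  intro η hη
  -- choose θ and δ
  set θ : ℝ := η / (4 * (Cψ * 2 * K + 1)) with hθdef
  have hden1 : (0:ℝ) < 4 * (Cψ * 2 * K + 1) := by nlinarith
  have hθ : 0 < θ := div_pos hη hden1
  have hθeq : θ * (4 * (Cψ * 2 * K + 1)) = η := div_mul_cancel₀ η hden1.ne'
  set δ : ℝ := η * θ / (4 * (Cψ * b + 1)) with hδdef
  have hden2 : (0:ℝ) < 4 * (Cψ * b + 1) := by nlinarith
  have hδ : 0 < δ := div_pos (mul_pos hη hθ) hden2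
  have hδeq : δ * (4 * (Cψ * b + 1)) = η * θ := div_mul_cancel₀ _ hden2.ne'
  set φ : ℝ × ℝ → ℝ := fun x => chi c d δ x.1 * ψ x.2 with hφdef
  have hφc : Continuous φ := ((chi_cont c d δ).comp continuous_fst).mul (hψ.comp continuous_snd)
  -- main term tends to 0
  have hmainT : Tendsto (fun n => ∫ x in Ioo c d ×ˢ Ioo (-b) (0:ℝ),
      (chi c d δ x.1 * ψ x.2) * (g n x - G x)) atTop (𝓝 0) := by
    have hext : ∀ n, ∫ x in Ioo c d ×ˢ Ioo (-b) (0:ℝ),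
        (chi c d δ x.1 * ψ x.2) * (g n x - G x)
        = (∫ x in Ioo 0 a ×ˢ Ioo (-b) (0:ℝ), g n x * φ x)
          - ∫ x in Ioo 0 a ×ˢ Ioo (-b) (0:ℝ), G x * φ x := by
      intro n
      have hcont : ContinuousOn (fun x => (chi c d δ x.1 * ψ x.2) * (g n x - G x))
          (Icc 0 a ×ˢ Icc (-b) 0) :=
        (hφc.continuousOn.mul ((hgc n).sub hGc))
      have hsplit := integral_inter_add_diff (f := fun x => (chi c d δ x.1 * ψ x.2) * (g n x - G x))
        (s := Ioo 0 a ×ˢ Ioo (-b) (0:ℝ)) (t := Ioo c d ×ˢ Ioo (-b) (0:ℝ)) hSm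
        (intOn hcont clsub)
      rw [inter_eq_self_of_subset_right hSsubΩ] at hsplit
      have hzero : ∫ x in (Ioo 0 a ×ˢ Ioo (-b) (0:ℝ)) \ (Ioo c d ×ˢ Ioo (-b) (0:ℝ)),
          (chi c d δ x.1 * ψ x.2) * (g n x - G x) = 0 := by
        rw [setIntegral_congr_fun (hΩm.diff hSm) (g := fun _ => (0:ℝ))]
        · simp
        · intro x hx
          obtain ⟨hxΩ, hxS⟩ := hx
          have hx1 : x.1 ≤ c ∨ d ≤ x.1 := by
            by_contra hcon
            push_neg at hcon
            exact hxS ⟨⟨hcon.1, hcon.2⟩, hxΩ.2⟩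
          simp [chi_eq_zero hδ hx1]
      have h2 : ∫ x in Ioo 0 a ×ˢ Ioo (-b) (0:ℝ), (chi c d δ x.1 * ψ x.2) * (g n x - G x)
          = (∫ x in Ioo 0 a ×ˢ Ioo (-b) (0:ℝ), g n x * φ x)
            - ∫ x in Ioo 0 a ×ˢ Ioo (-b) (0:ℝ), G x * φ x := by
        rw [← integral_sub (f := fun x => g n x * φ x) (g := fun x => G x * φ x)
          (intOn ((hgc n).mul hφc.continuousOn) clsub)
          (intOn (hGc.mul hφc.continuousOn) clsub)]
        apply setIntegral_congr_fun hΩm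
        intro x _
        show (chi c d δ x.1 * ψ x.2) * (g n x - G x) = g n x * φ x - G x * φ x
        simp only [hφdef]
        ring
      rw [← h2, ← hsplit, hzero, add_zero]
    have h3 := (hw φ hφc).sub
      (tendsto_const_nhds (x := ∫ x in Ioo 0 a ×ˢ Ioo (-b) (0:ℝ), G x * φ x))
    rw [sub_self] at h3
    exact h3.congr (fun n => (hext n).symm)
  -- error term uniform bound
  have herr : ∀ n, |∫ x in Ioo c d ×ˢ Ioo (-b) (0:ℝ),
      ((1 - chi c d δ x.1) * ψ x.2) * (g n x - G x)| ≤ η / 2 := by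
    intro n
    set q : ℝ × ℝ → ℝ := fun x => ((1 - chi c d δ x.1) * ψ x.2) * (g n x - G x) with hqdef
    have hqc : ContinuousOn q (Icc 0 a ×ˢ Icc (-b) 0) :=
      (((continuous_const.sub ((chi_cont c d δ).comp continuous_fst)).mul
        (hψ.comp continuous_snd)).continuousOn.mul ((hgc n).sub hGc))
    set P : Set (ℝ × ℝ) := Prod.fst ⁻¹' Icc (c + δ) (d - δ) with hPdef
    have hPm : MeasurableSet P := measurableSet_Icc.preimage measurable_fst
    have hsplit := integral_inter_add_diff (f := q) (s := Ioo c d ×ˢ Ioo (-b) (0:ℝ))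
      (t := P) hPm (intOn hqc hScl)
    have hzero : ∫ x in (Ioo c d ×ˢ Ioo (-b) (0:ℝ)) ∩ P, q x = 0 := by
      rw [setIntegral_congr_fun (hSm.inter hPm) (g := fun _ => (0:ℝ))]
      · simp
      · intro x hx
        have h1 := chi_eq_one hδ hx.2.1 hx.2.2
        simp [hqdef, h1]
    -- the remaining piece
    set s' := (Ioo c d ×ˢ Ioo (-b) (0:ℝ)) \ P with hs'def
    have hs'm : MeasurableSet s' := hSm.diff hPm
    have hs'sub : s' ⊆ Ioo 0 a ×ˢ Ioo (-b) (0:ℝ) := (diff_subset).trans hSsubΩ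
    -- volume bound
    have hvol : (volume s').toReal ≤ 2 * δ * b := by
      have hsub2 : s' ⊆ (Ioo c (c + δ) ∪ Ioo (d - δ) d) ×ˢ Ioo (-b) (0:ℝ) := by
        rintro x ⟨⟨hx1, hx2⟩, hxP⟩
        refine ⟨?_, hx2⟩
        simp only [hPdef, mem_preimage, mem_Icc, not_and_or, not_le] at hxP
        rcases hxP with h | h
        · exact Or.inl ⟨hx1.1, h⟩
        · exact Or.inr ⟨h, hx1.2⟩
      apply ENNReal.toReal_le_of_le_ofReal (by positivity)
      calc volume s' ≤ volume ((Ioo c (c + δ) ∪ Ioo (d - δ) d) ×ˢ Ioo (-b) (0:ℝ)) :=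
            measure_mono hsub2
        _ = volume (Ioo c (c + δ) ∪ Ioo (d - δ) d) * volume (Ioo (-b) (0:ℝ)) := by
            rw [Measure.volume_eq_prod, Measure.prod_prod]
        _ ≤ (volume (Ioo c (c + δ)) + volume (Ioo (d - δ) d)) * volume (Ioo (-b) (0:ℝ)) :=
            mul_le_mul_left (measure_union_le _ _) _
        _ = (ENNReal.ofReal δ + ENNReal.ofReal δ) * ENNReal.ofReal b := by
            rw [Real.volume_Ioo, Real.volume_Ioo, Real.volume_Ioo]
            norm_num
        _ = ENNReal.ofReal (2 * δ * b) := by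
            rw [← ENNReal.ofReal_add hδ.le hδ.le,
              ← ENNReal.ofReal_mul (by positivity : (0:ℝ) ≤ δ + δ)]
            congr 1
            ring
    -- pointwise bound and conclusion
    have habs : |∫ x in s', q x| ≤ ∫ x in s', |q x| := by
      have h := norm_integral_le_integral_norm (μ := volume.restrict s') q
      simpa [Real.norm_eq_abs] using h
    have hmono : ∫ x in s', |q x| ≤ Cψ * ∫ x in s', |g n x - G x| := by
      rw [← integral_const_mul]
      apply setIntegral_mono_on (intOn hqc.abs (hs'sub.trans clsub))
        ((intOn ((hgc n).sub hGc).abs (hs'sub.trans clsub)).const_mul Cψ) hs'm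
      intro x hx
      have hx2 : x.2 ∈ Icc (-b) (0:ℝ) := Ioo_subset_Icc_self (hs'sub hx).2
      have h1 : |1 - chi c d δ x.1| ≤ 1 := by
        rw [abs_le]
        constructor
        · linarith [chi_le_one c d δ x.1]
        · linarith [chi_nonneg c d δ x.1]
      have h2 : |ψ x.2| ≤ Cψ := hCψ x.2 hx2
      simp only [hqdef]
      rw [abs_mul, abs_mul]
      have h3 : |1 - chi c d δ x.1| * |ψ x.2| ≤ 1 * Cψ :=
        mul_le_mul h1 h2 (abs_nonneg _) zero_le_one
      rw [one_mul] at h3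
      exact mul_le_mul_of_nonneg_right h3 (abs_nonneg _)
    have hbp := bound_piece (f := fun x => g n x - G x) ((hgc n).sub hGc) hs'm hs'sub hθ
      (hdsq n) hvol
    have hcalc : |∫ x in Ioo c d ×ˢ Ioo (-b) (0:ℝ), q x| ≤
        Cψ * (θ / 2 * (4 * K) + 1 / (2 * θ) * (2 * δ * b)) := by
      rw [← hsplit, hzero, zero_add]
      calc |∫ x in s', q x| ≤ ∫ x in s', |q x| := habs
        _ ≤ Cψ * ∫ x in s', |g n x - G x| := hmono
        _ ≤ Cψ * (θ / 2 * (4 * K) + 1 / (2 * θ) * (2 * δ * b)) :=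
            mul_le_mul_of_nonneg_left hbp hCψ0
    refine le_trans hcalc ?_
    -- numeric: Cψ*(2θK + δb/θ) ≤ η/2
    have e1 : Cψ * (θ / 2 * (4 * K)) ≤ η / 4 := by nlinarith [hθ.le]
    have e2 : Cψ * (1 / (2 * θ) * (2 * δ * b)) ≤ η / 4 := by
      have h4 : Cψ * (1 / (2 * θ) * (2 * δ * b)) = (Cψ * δ * b) / θ := by
        field_simp
      rw [h4, div_le_iff₀ hθ]
      nlinarith [hδ.le, hθ.le]
    nlinarith
  -- combine
  have hept := (NormedAddCommGroup.tendsto_nhds_zero.1 hmainT) (η / 4) (by positivity)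
  filter_upwards [hept] with n hn
  have hsum : ∫ x in Ioo c d ×ˢ Ioo (-b) (0:ℝ), ψ x.2 * (g n x - G x)
      = (∫ x in Ioo c d ×ˢ Ioo (-b) (0:ℝ), (chi c d δ x.1 * ψ x.2) * (g n x - G x))
        + ∫ x in Ioo c d ×ˢ Ioo (-b) (0:ℝ), ((1 - chi c d δ x.1) * ψ x.2) * (g n x - G x) := by
    have i1 : IntegrableOn (fun x : ℝ × ℝ => (chi c d δ x.1 * ψ x.2) * (g n x - G x))
        (Ioo c d ×ˢ Ioo (-b) (0:ℝ)) :=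
      intOn ((((chi_cont c d δ).comp continuous_fst).mul
        (hψ.comp continuous_snd)).continuousOn.mul ((hgc n).sub hGc)) hScl
    have i2 : IntegrableOn (fun x : ℝ × ℝ => ((1 - chi c d δ x.1) * ψ x.2) * (g n x - G x))
        (Ioo c d ×ˢ Ioo (-b) (0:ℝ)) :=
      intOn (((continuous_const.sub ((chi_cont c d δ).comp continuous_fst)).mul
        (hψ.comp continuous_snd)).continuousOn.mul ((hgc n).sub hGc)) hScl
    rw [← integral_add i1 i2]
    apply setIntegral_congr_fun hSm
    intro x _
    simp only [Pi.add_apply]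
    ring
  rw [Real.norm_eq_abs, hsum]
  calc |(∫ x in Ioo c d ×ˢ Ioo (-b) (0:ℝ), (chi c d δ x.1 * ψ x.2) * (g n x - G x))
        + ∫ x in Ioo c d ×ˢ Ioo (-b) (0:ℝ), ((1 - chi c d δ x.1) * ψ x.2) * (g n x - G x)|
      ≤ |∫ x in Ioo c d ×ˢ Ioo (-b) (0:ℝ), (chi c d δ x.1 * ψ x.2) * (g n x - G x)|
        + |∫ x in Ioo c d ×ˢ Ioo (-b) (0:ℝ), ((1 - chi c d δ x.1) * ψ x.2) * (g n x - G x)| :=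
        abs_add_le _ _
    _ < η := by
        rw [Real.norm_eq_abs] at hn
        have := herr n
        linarith
set_option maxHeartbeats 1000000 in
lemma strip_term {a b c d : ℝ} (hb : 0 < b) (hc : 0 ≤ c) (hcd : c < d) (hd : d ≤ a)
    (ε : ℕ → ℝ) (hεpos : ∀ n, 0 < ε n) (hεlim : Tendsto ε atTop (𝓝 0))
    (g : ℕ → ℝ × ℝ → ℝ)
    (hgc : ∀ n, ContinuousOn (g n) (Icc 0 a ×ˢ Icc (-b) 0))
    (K : ℝ) (hgK : ∀ n, ∫ x in Ioo 0 a ×ˢ Ioo (-b) (0:ℝ), (g n x) ^ 2 ≤ K) :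
    Tendsto (fun n => ∫ x in Ioo c d ×ˢ Ioo (-b) (0:ℝ),
      (max 0 ((x.2 + ε n) / ε n)) * g n x) atTop (𝓝 0) := by
  have hΩm : MeasurableSet (Ioo (0:ℝ) a ×ˢ Ioo (-b) (0:ℝ)) :=
    measurableSet_Ioo.prod measurableSet_Ioo
  have hSm : MeasurableSet (Ioo c d ×ˢ Ioo (-b) (0:ℝ)) :=
    measurableSet_Ioo.prod measurableSet_Ioo
  have hSsubΩ : Ioo c d ×ˢ Ioo (-b) (0:ℝ) ⊆ Ioo 0 a ×ˢ Ioo (-b) (0:ℝ) :=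
    prod_mono (Ioo_subset_Ioo hc hd) le_rfl
  have hScl : Ioo c d ×ˢ Ioo (-b) (0:ℝ) ⊆ Icc 0 a ×ˢ Icc (-b) 0 := hSsubΩ.trans clsub
  have hK0 : 0 ≤ K :=
    le_trans (setIntegral_nonneg hΩm (fun x _ => sq_nonneg (g 0 x))) (hgK 0)
  rw [NormedAddCommGroup.tendsto_nhds_zero]
  intro η hη
  set θ : ℝ := η / (2 * (K + 1)) with hθdef
  have hden : (0:ℝ) < 2 * (K + 1) := by nlinarith
  have hθ : 0 < θ := div_pos hη hden
  have hθeq : θ * (2 * (K + 1)) = η := div_mul_cancel₀ η hden.ne'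
  have he0 : (0:ℝ) < θ * η / (d - c) := by
    apply div_pos (mul_pos hθ hη)
    linarith
  filter_upwards [hεlim.eventually_lt_const he0] with n hn
  set q : ℝ × ℝ → ℝ := fun x => (max 0 ((x.2 + ε n) / ε n)) * g n x with hqdef
  have hqc : ContinuousOn q (Icc 0 a ×ˢ Icc (-b) 0) := by
    apply ContinuousOn.mul _ (hgc n)
    apply Continuous.continuousOn
    exact continuous_const.max ((continuous_snd.add continuous_const).div_const (ε n))
  set P : Set (ℝ × ℝ) := Prod.snd ⁻¹' Iic (-(ε n)) with hPdef
  have hPm : MeasurableSet P := measurableSet_Iic.preimage measurable_snd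
  have hsplit := integral_inter_add_diff (f := q) (s := Ioo c d ×ˢ Ioo (-b) (0:ℝ))
    (t := P) hPm (intOn hqc hScl)
  have hzero : ∫ x in (Ioo c d ×ˢ Ioo (-b) (0:ℝ)) ∩ P, q x = 0 := by
    rw [setIntegral_congr_fun (hSm.inter hPm) (g := fun _ => (0:ℝ))]
    · simp
    · intro x hx
      have hx2 : x.2 ≤ -(ε n) := hx.2
      have h1 : (x.2 + ε n) / ε n ≤ 0 :=
        div_nonpos_of_nonpos_of_nonneg (by linarith) (hεpos n).le
      simp [hqdef, max_eq_left h1]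
  set s' := (Ioo c d ×ˢ Ioo (-b) (0:ℝ)) \ P with hs'def
  have hs'm : MeasurableSet s' := hSm.diff hPm
  have hs'sub : s' ⊆ Ioo 0 a ×ˢ Ioo (-b) (0:ℝ) := (diff_subset).trans hSsubΩ
  have hvol : (volume s').toReal ≤ (d - c) * ε n := by
    have hsub2 : s' ⊆ Ioo c d ×ˢ Ioo (-(ε n)) (0:ℝ) := by
      rintro x ⟨⟨hx1, hx2⟩, hxP⟩
      simp only [hPdef, mem_preimage, mem_Iic, not_le] at hxP
      exact ⟨hx1, hxP, hx2.2⟩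
    apply ENNReal.toReal_le_of_le_ofReal (by nlinarith [(hεpos n).le])
    calc volume s' ≤ volume (Ioo c d ×ˢ Ioo (-(ε n)) (0:ℝ)) := measure_mono hsub2
      _ = volume (Ioo c d) * volume (Ioo (-(ε n)) (0:ℝ)) := by
          rw [Measure.volume_eq_prod, Measure.prod_prod]
      _ = ENNReal.ofReal (d - c) * ENNReal.ofReal (ε n) := by
          rw [Real.volume_Ioo, Real.volume_Ioo]
          norm_num
      _ = ENNReal.ofReal ((d - c) * ε n) := by
          rw [← ENNReal.ofReal_mul (by linarith)]
  have habs : |∫ x in s', q x| ≤ ∫ x in s', |q x| := by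
    have h := norm_integral_le_integral_norm (μ := volume.restrict s') q
    simpa [Real.norm_eq_abs] using h
  have hmono : ∫ x in s', |q x| ≤ ∫ x in s', |g n x| := by
    apply setIntegral_mono_on (intOn hqc.abs (hs'sub.trans clsub))
      (intOn (hgc n).abs (hs'sub.trans clsub)) hs'm
    intro x hx
    have hx2 : x.2 < 0 := (hs'sub hx).2.2
    have h1 : max 0 ((x.2 + ε n) / ε n) ≤ 1 := by
      apply max_le (by norm_num)
      rw [div_le_one (hεpos n)]
      linarith
    have h0 : 0 ≤ max 0 ((x.2 + ε n) / ε n) := le_max_left _ _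
    simp only [hqdef]
    rw [abs_mul, abs_of_nonneg h0]
    nlinarith [abs_nonneg (g n x)]
  have hbp := bound_piece (f := g n) (hgc n) hs'm hs'sub hθ (hgK n) hvol
  have hfinal : |∫ x in Ioo c d ×ˢ Ioo (-b) (0:ℝ), q x|
      ≤ θ / 2 * K + 1 / (2 * θ) * ((d - c) * ε n) := by
    rw [← hsplit, hzero, zero_add]
    exact le_trans habs (le_trans hmono hbp)
  rw [Real.norm_eq_abs]
  apply lt_of_le_of_lt hfinal
  have e1 : θ / 2 * K ≤ η / 2 := by nlinarith [hθ.le]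
  have e2 : 1 / (2 * θ) * ((d - c) * ε n) < η / 2 := by
    have h5 : (d - c) * ε n < (d - c) * (θ * η / (d - c)) :=
      mul_lt_mul_of_pos_left hn (by linarith)
    have h6 : (d - c) * (θ * η / (d - c)) = θ * η := by
      rw [mul_comm]
      exact div_mul_cancel₀ _ (by linarith : (d - c) ≠ 0)
    rw [h6] at h5
    calc 1 / (2 * θ) * ((d - c) * ε n) < 1 / (2 * θ) * (θ * η) :=
          mul_lt_mul_of_pos_left h5 (by positivity)
      _ = η / 2 := by field_simp
  linarith


lemma cont_pd1_cl {v : ℝ × ℝ → ℝ} {U : Set (ℝ × ℝ)} {a b : ℝ} (hUo : IsOpen U)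
    (hv : ContDiffOn ℝ 1 v U) (hsub : Icc 0 a ×ˢ Icc (-b) 0 ⊆ U) :
    ContinuousOn (pd1 v) (Icc 0 a ×ˢ Icc (-b) 0) := by
  have hC : ContinuousOn (fderiv ℝ v) U := hv.continuousOn_fderiv_of_isOpen hUo le_rfl
  exact (hC.clm_apply continuousOn_const).mono hsub

open TSaux in
set_option maxHeartbeats 2000000 in
/-- **Identification of the boundary trace by thin-strip averages.** If `u^{ε_n} ⇀ u`
weakly in `H¹(Ω₀)` with a uniform `H¹` bound, then the averages over the thin strip
of height `ε_n` below the upper boundary converge to the boundary trace of `u`. -/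
theorem thin_strip_trace_identification
    (a b : ℝ) (ha : 0 < a) (hb : 0 < b)
    (c d : ℝ) (hc : 0 ≤ c) (hcd : c < d) (hd : d ≤ a)
    (ε : ℕ → ℝ) (hεpos : ∀ n, 0 < ε n) (hεlim : Tendsto ε atTop (𝓝 0))
    (uu : ℕ → ℝ × ℝ → ℝ)
    (hreg : ∀ n, C1Nhd (uu n) (Omega0 a b))
    (M : ℝ)
    (hbdd : ∀ n, ∫ x in Omega0 a b,
      ((uu n x) ^ 2 + dot (grad (uu n) x) (grad (uu n) x)) ≤ M)
    (u : ℝ × ℝ → ℝ) (hu : C1Nhd u (Omega0 a b))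
    (huw1 : ∀ φ : ℝ × ℝ → ℝ, Continuous φ →
      Tendsto (fun n => ∫ x in Omega0 a b, uu n x * φ x) atTop
        (𝓝 (∫ x in Omega0 a b, u x * φ x)))
    (huw2 : ∀ Φ : ℝ × ℝ → ℝ × ℝ, Continuous Φ →
      Tendsto (fun n => ∫ x in Omega0 a b, dot (grad (uu n) x) (Φ x)) atTop
        (𝓝 (∫ x in Omega0 a b, dot (grad u x) (Φ x)))) :
    Tendsto (fun n => (1 / ε n) *
        ∫ x₁ in c..d, ∫ x₂ in (-(ε n))..(0:ℝ), uu n (x₁, x₂)) atTop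
      (𝓝 (∫ x₁ in c..d, u (x₁, 0))) := by
  have hΩeq : Omega0 a b = Ioo 0 a ×ˢ Ioo (-b) (0:ℝ) := rfl
  rw [hΩeq] at hbdd
  simp only [hΩeq] at huw1 huw2
  -- regularity data
  obtain ⟨Uu, hUuo, hUusub, hUu⟩ := hu
  choose Un hUno hUnsub hUn using hreg
  have hclO : closure (Omega0 a b) = Icc 0 a ×ˢ Icc (-b) 0 := by
    rw [Omega0, closure_prod_eq, closure_Ioo ha.ne, closure_Ioo (by linarith : -b ≠ (0:ℝ))]
  rw [hclO] at hUusub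
  simp only [hclO] at hUnsub
  -- continuity facts on the closed rectangle
  have hcu : ContinuousOn u (Icc 0 a ×ˢ Icc (-b) 0) := cont_cl hUuo hUu hUusub
  have hcp2u : ContinuousOn (pd2 u) (Icc 0 a ×ˢ Icc (-b) 0) := cont_pd2_cl hUuo hUu hUusub
  have hcun : ∀ n, ContinuousOn (uu n) (Icc 0 a ×ˢ Icc (-b) 0) :=
    fun n => cont_cl (hUno n) (hUn n) (hUnsub n)
  have hcp2un : ∀ n, ContinuousOn (pd2 (uu n)) (Icc 0 a ×ˢ Icc (-b) 0) :=
    fun n => cont_pd2_cl (hUno n) (hUn n) (hUnsub n)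
  have hcp1u : ContinuousOn (pd1 u) (Icc 0 a ×ˢ Icc (-b) 0) := cont_pd1_cl hUuo hUu hUusub
  have hcp1un : ∀ n, ContinuousOn (pd1 (uu n)) (Icc 0 a ×ˢ Icc (-b) 0) :=
    fun n => cont_pd1_cl (hUno n) (hUn n) (hUnsub n)
  have hΩm : MeasurableSet (Ioo (0:ℝ) a ×ˢ Ioo (-b) (0:ℝ)) :=
    measurableSet_Ioo.prod measurableSet_Ioo
  have hSm : MeasurableSet (Ioo c d ×ˢ Ioo (-b) (0:ℝ)) :=
    measurableSet_Ioo.prod measurableSet_Ioo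
  have hSsubΩ : Ioo c d ×ˢ Ioo (-b) (0:ℝ) ⊆ Ioo 0 a ×ˢ Ioo (-b) (0:ℝ) :=
    prod_mono (Ioo_subset_Ioo hc hd) le_rfl
  have hScl : Ioo c d ×ˢ Ioo (-b) (0:ℝ) ⊆ Icc 0 a ×ˢ Icc (-b) 0 := hSsubΩ.trans clsub
  -- L² bounds
  have key_sq : ∀ (v : ℝ × ℝ → ℝ) (Mv : ℝ), ContinuousOn v (Icc 0 a ×ˢ Icc (-b) 0) →
      ContinuousOn (pd1 v) (Icc 0 a ×ˢ Icc (-b) 0) →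
      ContinuousOn (pd2 v) (Icc 0 a ×ˢ Icc (-b) 0) →
      (∫ x in Ioo 0 a ×ˢ Ioo (-b) (0:ℝ), ((v x) ^ 2 + dot (grad v x) (grad v x))) ≤ Mv →
      (∫ x in Ioo 0 a ×ˢ Ioo (-b) (0:ℝ), (v x) ^ 2 ≤ Mv) ∧
      (∫ x in Ioo 0 a ×ˢ Ioo (-b) (0:ℝ), (pd2 v x) ^ 2 ≤ Mv) := by
    intro v Mv hv h1 h2 hM
    have hcdot : ContinuousOn (fun x => (v x) ^ 2 + dot (grad v x) (grad v x))
        (Icc 0 a ×ˢ Icc (-b) 0) := by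
      simp only [dot, grad]
      exact (hv.pow 2).add ((h1.mul h1).add (h2.mul h2))
    have hintdot : IntegrableOn (fun x => (v x) ^ 2 + dot (grad v x) (grad v x))
        (Ioo 0 a ×ˢ Ioo (-b) (0:ℝ)) := intOn hcdot clsub
    constructor
    · refine le_trans (setIntegral_mono_on (intOn (hv.pow 2) clsub) hintdot hΩm ?_) hM
      intro x _
      simp only [dot, grad]
      nlinarith [sq_nonneg (pd1 v x), sq_nonneg (pd2 v x)]
    · refine le_trans (setIntegral_mono_on (intOn (h2.pow 2) clsub) hintdot hΩm ?_) hM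
      intro x _
      simp only [dot, grad]
      nlinarith [sq_nonneg (pd1 v x), sq_nonneg (v x)]
  set Ku : ℝ := ∫ x in Ioo 0 a ×ˢ Ioo (-b) (0:ℝ), ((u x) ^ 2 + dot (grad u x) (grad u x))
    with hKudef
  set K : ℝ := max M Ku with hKdef
  have hbddn : ∀ n, (∫ x in Ioo 0 a ×ˢ Ioo (-b) (0:ℝ), (uu n x) ^ 2 ≤ K) ∧
      (∫ x in Ioo 0 a ×ˢ Ioo (-b) (0:ℝ), (pd2 (uu n) x) ^ 2 ≤ K) := by
    intro n
    have h := key_sq (uu n) M (hcun n) (hcp1un n) (hcp2un n) (hbdd n)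
    exact ⟨h.1.trans (le_max_left _ _), h.2.trans (le_max_left _ _)⟩
  have hbddu : (∫ x in Ioo 0 a ×ˢ Ioo (-b) (0:ℝ), (u x) ^ 2 ≤ K) ∧
      (∫ x in Ioo 0 a ×ˢ Ioo (-b) (0:ℝ), (pd2 u x) ^ 2 ≤ K) := by
    have h := key_sq u Ku hcu hcp1u hcp2u le_rfl
    exact ⟨h.1.trans (le_max_right _ _), h.2.trans (le_max_right _ _)⟩
  -- weak convergence of pd2
  have hw2 : ∀ φ : ℝ × ℝ → ℝ, Continuous φ →
      Tendsto (fun n => ∫ x in Ioo 0 a ×ˢ Ioo (-b) (0:ℝ), pd2 (uu n) x * φ x) atTop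
        (𝓝 (∫ x in Ioo 0 a ×ˢ Ioo (-b) (0:ℝ), pd2 u x * φ x)) := by
    intro φ hφ
    have h := huw2 (fun x => ((0:ℝ), φ x)) (continuous_const.prodMk hφ)
    simp only [dot, grad, mul_zero, zero_mul, zero_add] at h
    exact h
  -- the main identities
  set G : ℝ × ℝ → ℝ := fun x => wb b x.2 * u x + Wb b x.2 * pd2 u x with hGdef
  set Fn : ℕ → ℝ × ℝ → ℝ := fun n x => wb b x.2 * uu n x
    + (Wb b x.2 - max 0 ((x.2 + ε n) / ε n)) * pd2 (uu n) x with hFndef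
  have hGc : ContinuousOn G (Icc 0 a ×ˢ Icc (-b) 0) := by
    rw [hGdef]
    exact (((wb_cont b).comp continuous_snd).continuousOn.mul hcu).add
      (((Wb_cont b).comp continuous_snd).continuousOn.mul hcp2u)
  have hFnc : ∀ n, ContinuousOn (Fn n) (Icc 0 a ×ˢ Icc (-b) 0) := by
    intro n
    rw [hFndef]
    apply (((wb_cont b).comp continuous_snd).continuousOn.mul (hcun n)).add
    apply ContinuousOn.mul _ (hcp2un n)
    apply Continuous.continuousOn
    exact ((Wb_cont b).comp continuous_snd).sub
      (continuous_const.max ((continuous_snd.add continuous_const).div_const (ε n)))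
  have hT : (∫ x₁ in c..d, u (x₁, 0)) = ∫ x in Ioo c d ×ˢ Ioo (-b) (0:ℝ), G x := by
    rw [← iterated_eq_set hcd.le hb G (intOn hGc hScl)]
    apply intervalIntegral.integral_congr
    intro x₁ hx₁
    rw [uIcc_of_le hcd.le] at hx₁
    have hx₁' : x₁ ∈ Icc (0:ℝ) a := ⟨hc.trans hx₁.1, hx₁.2.trans hd⟩
    obtain ⟨sc, sp2, sder⟩ := slice_props hUuo hUu hUusub hx₁'
    exact (trace_avg hb sc sp2 sder).symm
  have hA : ∀ n, ε n ≤ b →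
      (1 / ε n) * (∫ x₁ in c..d, ∫ x₂ in (-(ε n))..(0:ℝ), uu n (x₁, x₂))
        = ∫ x in Ioo c d ×ˢ Ioo (-b) (0:ℝ), Fn n x := by
    intro n hεb
    rw [← iterated_eq_set hcd.le hb (Fn n) (intOn (hFnc n) hScl),
      ← intervalIntegral.integral_const_mul]
    apply intervalIntegral.integral_congr
    intro x₁ hx₁
    rw [uIcc_of_le hcd.le] at hx₁
    have hx₁' : x₁ ∈ Icc (0:ℝ) a := ⟨hc.trans hx₁.1, hx₁.2.trans hd⟩
    obtain ⟨sc, sp2, sder⟩ := slice_props (hUno n) (hUn n) (hUnsub n) hx₁'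
    exact (strip_avg hb (hεpos n) hεb sc sp2 sder).symm
  -- the three convergence pieces
  have t1 : Tendsto (fun n => ∫ x in Ioo c d ×ˢ Ioo (-b) (0:ℝ),
      wb b x.2 * (uu n x - u x)) atTop (𝓝 0) := by
    apply weak_term hb hc hcd hd uu u hcun hcu K (fun n => (hbddn n).1) hbddu.1 huw1
      (wb b) (wb_cont b) (2 / b)
    exact fun t ht => wb_abs_le hb ht
  have t3 : Tendsto (fun n => ∫ x in Ioo c d ×ˢ Ioo (-b) (0:ℝ),
      Wb b x.2 * (pd2 (uu n) x - pd2 u x)) atTop (𝓝 0) := by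
    apply weak_term hb hc hcd hd (fun n => pd2 (uu n)) (pd2 u) hcp2un hcp2u K
      (fun n => (hbddn n).2) hbddu.2 hw2 (Wb b) (Wb_cont b) 1
    intro t ht
    have h := Wb_mem hb ht
    rw [abs_of_nonneg h.1]
    exact h.2
  have t2' := strip_term hb hc hcd hd ε hεpos hεlim (fun n => pd2 (uu n)) hcp2un K
    (fun n => (hbddn n).2)
  have t2 : Tendsto (fun n => ∫ x in Ioo c d ×ˢ Ioo (-b) (0:ℝ),
      (-(max 0 ((x.2 + ε n) / ε n))) * pd2 (uu n) x) atTop (𝓝 0) := by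
    have heq : ∀ n, ∫ x in Ioo c d ×ˢ Ioo (-b) (0:ℝ),
        (-(max 0 ((x.2 + ε n) / ε n))) * pd2 (uu n) x
        = -(∫ x in Ioo c d ×ˢ Ioo (-b) (0:ℝ), (max 0 ((x.2 + ε n) / ε n)) * pd2 (uu n) x) := by
      intro n
      rw [← integral_neg]
      apply setIntegral_congr_fun hSm
      intro x _
      ring
    have h := t2'.neg
    rw [neg_zero] at h
    exact h.congr (fun n => (heq n).symm)
  -- decomposition
  have hdec : ∀ n, (∫ x in Ioo c d ×ˢ Ioo (-b) (0:ℝ), Fn n x)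
      = ((∫ x in Ioo c d ×ˢ Ioo (-b) (0:ℝ), wb b x.2 * (uu n x - u x))
        + (∫ x in Ioo c d ×ˢ Ioo (-b) (0:ℝ), (-(max 0 ((x.2 + ε n) / ε n))) * pd2 (uu n) x)
        + (∫ x in Ioo c d ×ˢ Ioo (-b) (0:ℝ), Wb b x.2 * (pd2 (uu n) x - pd2 u x)))
        + (∫ x in Ioo c d ×ˢ Ioo (-b) (0:ℝ), G x) := by
    intro n
    have i1 : IntegrableOn (fun x : ℝ × ℝ => wb b x.2 * (uu n x - u x))
        (Ioo c d ×ˢ Ioo (-b) (0:ℝ)) :=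
      intOn (((wb_cont b).comp continuous_snd).continuousOn.mul ((hcun n).sub hcu)) hScl
    have i2 : IntegrableOn (fun x : ℝ × ℝ => (-(max 0 ((x.2 + ε n) / ε n))) * pd2 (uu n) x)
        (Ioo c d ×ˢ Ioo (-b) (0:ℝ)) := by
      apply intOn _ hScl
      apply ContinuousOn.mul _ (hcp2un n)
      apply Continuous.continuousOn
      exact (continuous_const.max ((continuous_snd.add continuous_const).div_const (ε n))).neg
    have i3 : IntegrableOn (fun x : ℝ × ℝ => Wb b x.2 * (pd2 (uu n) x - pd2 u x))
        (Ioo c d ×ˢ Ioo (-b) (0:ℝ)) :=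
      intOn (((Wb_cont b).comp continuous_snd).continuousOn.mul ((hcp2un n).sub hcp2u)) hScl
    have iG : IntegrableOn G (Ioo c d ×ˢ Ioo (-b) (0:ℝ)) := intOn hGc hScl
    have i34 : IntegrableOn (fun x : ℝ × ℝ => Wb b x.2 * (pd2 (uu n) x - pd2 u x) + G x)
        (Ioo c d ×ˢ Ioo (-b) (0:ℝ)) := i3.add iG
    have i234 : IntegrableOn (fun x : ℝ × ℝ => (-(max 0 ((x.2 + ε n) / ε n))) * pd2 (uu n) x
        + (Wb b x.2 * (pd2 (uu n) x - pd2 u x) + G x)) (Ioo c d ×ˢ Ioo (-b) (0:ℝ)) := i2.add i34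
    have e : EqOn (Fn n) (fun x => wb b x.2 * (uu n x - u x)
        + ((-(max 0 ((x.2 + ε n) / ε n))) * pd2 (uu n) x
          + (Wb b x.2 * (pd2 (uu n) x - pd2 u x) + G x))) (Ioo c d ×ˢ Ioo (-b) (0:ℝ)) := by
      intro x _
      simp only [hFndef, hGdef]
      ring
    rw [setIntegral_congr_fun hSm e, integral_add i1 i234, integral_add i2 i34,
      integral_add i3 iG]
    ring
  -- conclusion
  rw [hT]
  have hC : Tendsto (fun n => ∫ x in Ioo c d ×ˢ Ioo (-b) (0:ℝ), Fn n x) atTop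
      (𝓝 (∫ x in Ioo c d ×ˢ Ioo (-b) (0:ℝ), G x)) := by
    have h := ((t1.add t2).add t3).add
      (tendsto_const_nhds (x := ∫ x in Ioo c d ×ˢ Ioo (-b) (0:ℝ), G x))
    simp only [zero_add] at h
    exact h.congr (fun n => (hdec n).symm)
  have hεev : ∀ᶠ n in atTop, ε n ≤ b :=
    (hεlim.eventually_lt_const hb).mono (fun n h => h.le)
  apply hC.congr'
  filter_upwards [hεev] with n h
  exact (hA n h).symm
end
end
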